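/- arXiv:1607.05560 — 4 statements merged into one kernel-verified Lean document; each statement's English description precedes it below -/
import Mathlib

section
/- For any two N×N Hermitian matrices A and B, the supremum norm of the difference of the cumulative distribution functions of their empirical spectral measures is at most rank(A−B)/N. -/
open Matrix Finset Module

section Aux
variable {N : ℕ} {H : Matrix (Fin N) (Fin N) ℂ}



lemma repr_toEuclideanLin (hH : H.IsHermitian) (v : EuclideanSpace ℂ (Fin N)) (i : Fin N) :
    hH.eigenvectorBasis.repr (toEuclideanLin H v) i
      = hH.eigenvalues i • hH.eigenvectorBasis.repr v i := by
  have hsym := (isHermitian_iff_isSymmetric.1 hH)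
  rw [OrthonormalBasis.repr_apply_apply, OrthonormalBasis.repr_apply_apply,
    ← hsym (hH.eigenvectorBasis i) v]
  have h1 : toEuclideanLin H (hH.eigenvectorBasis i)
      = hH.eigenvalues i • hH.eigenvectorBasis i := by
    ext j; simpa using congrFun (hH.mulVec_eigenvectorBasis i) j
  rw [h1, RCLike.real_smul_eq_coe_smul (K := ℂ), inner_smul_left]
  simp [RCLike.real_smul_eq_coe_mul]

lemma quad_form (hH : H.IsHermitian) (v : EuclideanSpace ℂ (Fin N)) :
    RCLike.re (inner ℂ v (toEuclideanLin H v) : ℂ)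
      = ∑ i, hH.eigenvalues i * ‖hH.eigenvectorBasis.repr v i‖ ^ 2 := by
  rw [← hH.eigenvectorBasis.repr.inner_map_map v (toEuclideanLin H v)]
  rw [PiLp.inner_apply, map_sum]
  refine Finset.sum_congr rfl fun i _ => ?_
  rw [repr_toEuclideanLin hH v i]
  rw [RCLike.real_smul_eq_coe_smul (K := ℂ), inner_smul_right,
    inner_self_eq_norm_sq_to_K]
  norm_cast

lemma norm_sq_repr (b : OrthonormalBasis (Fin N) ℂ (EuclideanSpace ℂ (Fin N)))
    (v : EuclideanSpace ℂ (Fin N)) :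
    RCLike.re (inner ℂ v v : ℂ) = ∑ i, ‖b.repr v i‖ ^ 2 := by
  rw [← b.repr.inner_map_map v v, PiLp.inner_apply, map_sum]
  refine Finset.sum_congr rfl fun i _ => ?_
  rw [RCLike.inner_apply, RCLike.mul_conj]
  norm_cast


lemma repr_eq_zero_of_mem_span (b : OrthonormalBasis (Fin N) ℂ (EuclideanSpace ℂ (Fin N)))
    (S : Set (Fin N)) {v : EuclideanSpace ℂ (Fin N)}
    (hv : v ∈ Submodule.span ℂ (b '' S)) {i : Fin N} (hi : i ∉ S) :
    b.repr v i = 0 := by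
  induction hv using Submodule.span_induction with
  | mem w hw =>
    obtain ⟨j, hjS, rfl⟩ := hw
    rw [OrthonormalBasis.repr_self]
    have : i ≠ j := fun h => hi (h ▸ hjS)
    simp [EuclideanSpace.single_apply, this]
  | zero => simp
  | add w₁ w₂ _ _ h1 h2 => simp [h1, h2]
  | smul c w _ h => simp [h]

lemma finrank_span_onb (b : OrthonormalBasis (Fin N) ℂ (EuclideanSpace ℂ (Fin N)))
    (S : Finset (Fin N)) :
    Module.finrank ℂ (Submodule.span ℂ (b '' (S : Set (Fin N)))) = S.card := by
  have hli : LinearIndependent ℂ (fun i : (S : Set (Fin N)) => b i) :=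
    b.orthonormal.linearIndependent.comp _ Subtype.val_injective
  have := finrank_span_eq_card hli
  rw [← Set.image_eq_range] at this
  rw [this]; simp


lemma rank_ker (M : Matrix (Fin N) (Fin N) ℂ) :
    finrank ℂ (LinearMap.ker (toEuclideanLin M)) + M.rank = N := by
  have h1 : M.rank = finrank ℂ (LinearMap.range (toEuclideanLin M)) := by
    rw [M.rank_eq_finrank_range_toLin (PiLp.basisFun 2 ℂ (Fin N)) (PiLp.basisFun 2 ℂ (Fin N))]
    rw [toEuclideanLin_eq_toLin]
  rw [h1, add_comm, LinearMap.finrank_range_add_finrank_ker, finrank_euclideanSpace,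
    Fintype.card_fin]

lemma key (A B : Matrix (Fin N) (Fin N) ℂ) (hA : A.IsHermitian) (hB : B.IsHermitian) (x : ℝ) :
    (univ.filter fun i => hA.eigenvalues i ≤ x).card ≤
      (univ.filter fun i => hB.eigenvalues i ≤ x).card + (A - B).rank := by
  by_contra hcon
  push_neg at hcon
  set bA := hA.eigenvectorBasis with hbA
  set bB := hB.eigenvectorBasis with hbB
  set SA : Finset (Fin N) := univ.filter fun i => hA.eigenvalues i ≤ x with hSA
  set SB : Finset (Fin N) := univ.filter fun i => hB.eigenvalues i ≤ x with hSB
  set SB' : Finset (Fin N) := univ.filter fun i => ¬ hB.eigenvalues i ≤ x with hSB'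
  set VA := Submodule.span ℂ (bA '' (SA : Set (Fin N))) with hVA
  set U := Submodule.span ℂ (bB '' (SB' : Set (Fin N))) with hU
  set W := LinearMap.ker (toEuclideanLin (A - B)) with hW
  have hcard : SB.card + SB'.card = N := by
    rw [hSB, hSB', Finset.card_filter_add_card_filter_not, card_univ, Fintype.card_fin]
  have hdVA : finrank ℂ VA = SA.card := finrank_span_onb bA SA
  have hdU : finrank ℂ U = SB'.card := finrank_span_onb bB SB'
  have hdW : finrank ℂ W + (A - B).rank = N := rank_ker (A - B)
  have hE : finrank ℂ (EuclideanSpace ℂ (Fin N)) = N := by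
    rw [finrank_euclideanSpace, Fintype.card_fin]
  have h1 : finrank ℂ ↥(VA ⊔ W) + finrank ℂ ↥(VA ⊓ W)
      = finrank ℂ VA + finrank ℂ W := Submodule.finrank_sup_add_finrank_inf_eq VA W
  have h2 : finrank ℂ ↥((VA ⊓ W) ⊔ U) + finrank ℂ ↥((VA ⊓ W) ⊓ U)
      = finrank ℂ ↥(VA ⊓ W) + finrank ℂ U := Submodule.finrank_sup_add_finrank_inf_eq _ U
  have hle1 : finrank ℂ ↥(VA ⊔ W) ≤ N := le_trans (Submodule.finrank_le _) hE.le
  have hle2 : finrank ℂ ↥((VA ⊓ W) ⊔ U) ≤ N := le_trans (Submodule.finrank_le _) hE.le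
  have hpos : 0 < finrank ℂ ↥((VA ⊓ W) ⊓ U) := by omega
  have : Nontrivial ↥((VA ⊓ W) ⊓ U) := finrank_pos_iff.mp hpos
  obtain ⟨⟨v, hv⟩, hvne⟩ := exists_ne (0 : ↥((VA ⊓ W) ⊓ U))
  have hv0 : v ≠ 0 := by
    simpa [Submodule.mk_eq_zero] using hvne
  obtain ⟨⟨hvVA, hvW⟩, hvU⟩ := hv
  -- quadratic form facts
  have hAB : toEuclideanLin A v = toEuclideanLin B v := by
    have := (LinearMap.mem_ker).mp hvW
    rw [map_sub] at this
    exact sub_eq_zero.mp this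
  have hinA : RCLike.re (inner ℂ v (toEuclideanLin A v) : ℂ) ≤ x * RCLike.re (inner ℂ v v : ℂ) := by
    rw [quad_form hA v, norm_sq_repr bA v, Finset.mul_sum]
    refine Finset.sum_le_sum fun i _ => ?_
    by_cases hi : i ∈ SA
    · have : hA.eigenvalues i ≤ x := (Finset.mem_filter.mp hi).2
      exact mul_le_mul_of_nonneg_right this (sq_nonneg _)
    · have : bA.repr v i = 0 :=
        repr_eq_zero_of_mem_span bA (SA : Set (Fin N)) hvVA (by simpa using hi)
      simp [← hbA, this]
  have hinB : x * RCLike.re (inner ℂ v v : ℂ) < RCLike.re (inner ℂ v (toEuclideanLin B v) : ℂ) := by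
    rw [quad_form hB v, norm_sq_repr bB v, Finset.mul_sum]
    have hzero : ∀ i ∉ SB', bB.repr v i = 0 := fun i hi =>
      repr_eq_zero_of_mem_span bB (SB' : Set (Fin N)) hvU (by simpa using hi)
    have hex : ∃ i, bB.repr v i ≠ 0 := by
      by_contra hall
      push_neg at hall
      apply hv0
      have : bB.repr v = 0 := by
        ext i
        exact hall i
      simpa using bB.repr.map_eq_zero_iff.mp this
    obtain ⟨i₀, hi₀⟩ := hex
    have hi₀S : i₀ ∈ SB' := by
      by_contra h
      exact hi₀ (hzero i₀ h)
    refine Finset.sum_lt_sum (fun i _ => ?_) ⟨i₀, Finset.mem_univ i₀, ?_⟩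
    · by_cases hi : i ∈ SB'
      · have : x ≤ hB.eigenvalues i := le_of_lt (not_le.mp (Finset.mem_filter.mp hi).2)
        exact mul_le_mul_of_nonneg_right this (sq_nonneg _)
      · simp [← hbB, hzero i hi]
    · have hx : x < hB.eigenvalues i₀ := not_le.mp (Finset.mem_filter.mp hi₀S).2
      have hn : 0 < ‖bB.repr v i₀‖ ^ 2 := pow_pos (norm_pos_iff.mpr hi₀) 2
      exact mul_lt_mul_of_pos_right hx hn
  rw [hAB] at hinA
  exact absurd (hinB.trans_le hinA) (lt_irrefl _)

lemma rank_neg' (M : Matrix (Fin N) (Fin N) ℂ) : (-M).rank = M.rank := by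
  have h1 := rank_ker M
  have h2 := rank_ker (-M)
  have : LinearMap.ker (toEuclideanLin (-M)) = LinearMap.ker (toEuclideanLin M) := by
    ext w
    simp [LinearMap.mem_ker, map_neg, neg_eq_zero]
  rw [this] at h2
  omega


end Aux

/-- Empirical spectral CDF of a Hermitian matrix. -/
noncomputable def espCDF {N : ℕ} {A : Matrix (Fin N) (Fin N) ℂ}
    (hA : A.IsHermitian) (x : ℝ) : ℝ :=
  ((Finset.univ.filter fun i => hA.eigenvalues i ≤ x).card : ℝ) / N

/-- Rank inequality for CDFs of empirical spectral measures of Hermitian matrices. -/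
theorem stmt_0 (N : ℕ) (hN : 0 < N) (A B : Matrix (Fin N) (Fin N) ℂ)
    (hA : A.IsHermitian) (hB : B.IsHermitian) :
    (⨆ x : ℝ, |espCDF hA x - espCDF hB x|) ≤ ((A - B).rank : ℝ) / N := by
  have hNr : (0:ℝ) < N := by exact_mod_cast hN
  refine ciSup_le fun x => ?_
  have key1 := key A B hA hB x
  have key2 := key B A hB hA x
  have hrk : (B - A).rank = (A - B).rank := by
    rw [(neg_sub A B).symm, rank_neg']
  rw [hrk] at key2
  rw [espCDF, espCDF, div_sub_div_same, abs_div, abs_of_nonneg hNr.le]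
  gcongr
  rw [abs_sub_le_iff]
  constructor
  · rw [sub_le_iff_le_add]
    exact_mod_cast key1.trans (Nat.add_comm _ _).le
  · rw [sub_le_iff_le_add]
    exact_mod_cast key2.trans (Nat.add_comm _ _).le
end

section
/- The Stieltjes transform g(z) = ∫ (z−x)^{-1} dμ_sc(x) of the semicircular distribution μ_sc of variance σ² satisfies, for every z in the upper half-plane, the equation σ² g(z)² − z g(z) + 1 = 0. -/
open MeasureTheory Real

open intervalIntegral
open scoped NNReal ENNReal

/-- The semicircle distribution of variance `σ²`. -/
noncomputable def semicircle (σ : ℝ) : Measure ℝ :=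
  volume.withDensity fun x =>
    ENNReal.ofReal (Set.indicator (Set.Icc (-(2*σ)) (2*σ))
      (fun x => (2 * π * σ^2)⁻¹ * Real.sqrt (4 * σ^2 - x^2)) x)

/-- main integral -/
noncomputable def SCI (σ : ℝ) (z : ℂ) : ℂ :=
  ∫ x in (-(2*σ))..(2*σ), (Real.sqrt (4*σ^2 - x^2) : ℂ) * (z - x)⁻¹

lemma sub_ofReal_ne {z : ℂ} (hz : 0 < z.im) (x : ℝ) : z - (x:ℂ) ≠ 0 := by
  intro h
  have : (z - (x:ℂ)).im = 0 := by rw [h]; simp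
  simp [Complex.sub_im] at this
  linarith

lemma sc_eq (σ : ℝ) (hσ : 0 < σ) (z : ℂ) (hz : 0 < z.im) :
    ∫ x, (z - (x:ℂ))⁻¹ ∂(semicircle σ) = (((2 * π * σ^2)⁻¹ : ℝ) : ℂ) * SCI σ z := by
  have hρ : ∀ x : ℝ, 0 ≤ Set.indicator (Set.Icc (-(2*σ)) (2*σ))
      (fun x => (2 * π * σ^2)⁻¹ * Real.sqrt (4 * σ^2 - x^2)) x := by
    intro x
    apply Set.indicator_nonneg
    intro y _
    positivity
  have hmeas : Measurable fun x : ℝ => Real.toNNReal (Set.indicator (Set.Icc (-(2*σ)) (2*σ))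
      (fun x => (2 * π * σ^2)⁻¹ * Real.sqrt (4 * σ^2 - x^2)) x) := by
    apply Measurable.real_toNNReal
    exact Measurable.indicator (by fun_prop) measurableSet_Icc
  have h1 : semicircle σ = volume.withDensity fun x =>
      ((Real.toNNReal (Set.indicator (Set.Icc (-(2*σ)) (2*σ))
      (fun x => (2 * π * σ^2)⁻¹ * Real.sqrt (4 * σ^2 - x^2)) x) : ℝ≥0) : ℝ≥0∞) := rfl
  rw [h1, integral_withDensity_eq_integral_smul hmeas]
  have h2 : ∀ x : ℝ, (Real.toNNReal (Set.indicator (Set.Icc (-(2*σ)) (2*σ))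
      (fun x => (2 * π * σ^2)⁻¹ * Real.sqrt (4 * σ^2 - x^2)) x)) • (z - (x:ℂ))⁻¹
      = Set.indicator (Set.Icc (-(2*σ)) (2*σ))
        (fun x => ((((2 * π * σ^2)⁻¹ * Real.sqrt (4 * σ^2 - x^2) : ℝ)) : ℂ) * (z - (x:ℂ))⁻¹) x := by
    intro x
    by_cases hx : x ∈ Set.Icc (-(2*σ)) (2*σ)
    · rw [Set.indicator_of_mem hx, Set.indicator_of_mem hx, NNReal.smul_def,
        Real.coe_toNNReal _ (by positivity)]
      simp [Complex.real_smul]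
    · rw [Set.indicator_of_notMem hx, Set.indicator_of_notMem hx]
      simp
  simp_rw [h2]
  rw [MeasureTheory.integral_indicator measurableSet_Icc,
    MeasureTheory.integral_Icc_eq_integral_Ioc,
    ← intervalIntegral.integral_of_le (by linarith : -(2*σ) ≤ 2*σ), SCI,
    ← intervalIntegral.integral_const_mul]
  congr 1
  ext x
  push_cast
  ring

noncomputable def SCI2 (σ : ℝ) (z : ℂ) : ℂ :=
  ∫ x in (-(2*σ))..(2*σ), (Real.sqrt (4*σ^2 - x^2) : ℂ) * ((z - x)^2)⁻¹

lemma contF {w : ℂ} (hw : 0 < w.im) (σ : ℝ) :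
    Continuous (fun x : ℝ => (Real.sqrt (4*σ^2 - x^2) : ℂ) * (w - x)⁻¹) := by
  apply Continuous.mul
  · exact Complex.continuous_ofReal.comp (Real.continuous_sqrt.comp (by continuity))
  · exact Continuous.inv₀ (by continuity) (fun x => sub_ofReal_ne hw x)

lemma contF2 {w : ℂ} (hw : 0 < w.im) (σ : ℝ) :
    Continuous (fun x : ℝ => (Real.sqrt (4*σ^2 - x^2) : ℂ) * ((w - x)^2)⁻¹) := by
  apply Continuous.mul
  · exact Complex.continuous_ofReal.comp (Real.continuous_sqrt.comp (by continuity))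
  · exact Continuous.inv₀ (by continuity) (fun x => pow_ne_zero _ (sub_ofReal_ne hw x))

lemma sqrt_le {σ x : ℝ} (hσ : 0 ≤ σ) : Real.sqrt (4*σ^2 - x^2) ≤ 2*σ := by
  calc Real.sqrt (4*σ^2 - x^2) ≤ Real.sqrt (4*σ^2) := by
        apply Real.sqrt_le_sqrt; nlinarith
    _ = 2*σ := by
        rw [show 4*σ^2 = (2*σ)^2 by ring, Real.sqrt_sq (by linarith)]

lemma im_le_norm (w : ℂ) : w.im ≤ ‖w‖ := by
  calc w.im ≤ |w.im| := le_abs_self _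
    _ ≤ ‖w‖ := Complex.abs_im_le_norm w
    _ = ‖w‖ := rfl

lemma ball_im {z w : ℂ} (hz : 0 < z.im) (hw : w ∈ Metric.ball z (z.im/2)) :
    z.im/2 ≤ w.im := by
  have h1 : dist w z < z.im/2 := hw
  have h2 : |(w - z).im| ≤ ‖w - z‖ := by
    calc |(w - z).im| ≤ ‖w - z‖ := Complex.abs_im_le_norm _
      _ = ‖w - z‖ := rfl
  rw [Complex.dist_eq] at h1
  have := abs_le.1 h2
  simp only [Complex.sub_im] at this
  linarith [this.1]

lemma hasDerivAt_SCI (σ : ℝ) (hσ : 0 ≤ σ) (z : ℂ) (hz : 0 < z.im) :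
    HasDerivAt (SCI σ) (-SCI2 σ z) z := by
  have hε : 0 < z.im/2 := by linarith
  have key := intervalIntegral.hasDerivAt_integral_of_dominated_loc_of_deriv_le
    (F := fun (w : ℂ) (x : ℝ) => (Real.sqrt (4*σ^2 - x^2) : ℂ) * (w - x)⁻¹)
    (F' := fun (w : ℂ) (x : ℝ) => (Real.sqrt (4*σ^2 - x^2) : ℂ) * (-(((w - x)^2)⁻¹)))
    (x₀ := z) (a := -(2*σ)) (b := 2*σ) (μ := volume)
    (bound := fun _ => (2*σ) * ((z.im/2)^2)⁻¹) (Metric.ball_mem_nhds z hε)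
    ?_ ?_ ?_ ?_ ?_ ?_
  · refine key.2.congr_deriv ?_
    rw [SCI2, ← intervalIntegral.integral_neg]
    congr 1; ext x; ring
  · filter_upwards [Metric.ball_mem_nhds z hε] with w hw
    have hwim : 0 < w.im := lt_of_lt_of_le hε (ball_im hz hw)
    exact ((contF hwim σ).aestronglyMeasurable).restrict
  · exact ((contF hz σ).intervalIntegrable _ _)
  · exact (((contF2 hz σ).neg.congr (by intro x; simp only [Pi.neg_apply]; ring)).aestronglyMeasurable).restrict
  · apply Filter.Eventually.of_forall
    intro t _ w hw
    have hwim : 0 < w.im := lt_of_lt_of_le hε (ball_im hz hw)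
    rw [norm_mul, norm_neg, norm_inv, Complex.norm_real, Real.norm_eq_abs,
      abs_of_nonneg (Real.sqrt_nonneg _)]
    have h1 : Real.sqrt (4*σ^2 - t^2) ≤ 2*σ := sqrt_le hσ
    have h2 : z.im/2 ≤ ‖w - t‖ := by
      calc z.im/2 ≤ w.im := ball_im hz hw
        _ = (w - t).im := by simp
        _ ≤ ‖w - t‖ := im_le_norm _
    have h3 : ‖(w - (t:ℂ))^2‖ = ‖w - t‖^2 := by rw [norm_pow]
    rw [h3]
    apply mul_le_mul h1 _ (by positivity) (by linarith)
    rw [inv_le_inv₀ (by nlinarith) (by positivity)]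
    exact pow_le_pow_left₀ (by positivity) h2 2
  · exact intervalIntegrable_const
  · apply Filter.Eventually.of_forall
    intro t _ w hw
    have hwim : 0 < w.im := lt_of_lt_of_le hε (ball_im hz hw)
    have : HasDerivAt (fun w : ℂ => (w - (t:ℂ))⁻¹) (-(((w - t)^2)⁻¹)) w := by
      have h := ((hasDerivAt_id w).sub_const (t:ℂ)).inv (sub_ofReal_ne hwim t)
      refine h.congr_deriv ?_
      simp [id, neg_div, one_div]
    exact this.const_mul _

lemma mass (σ : ℝ) (hσ : 0 < σ) :
    ∫ x in (-(2*σ))..(2*σ), Real.sqrt (4*σ^2 - x^2) = 2*π*σ^2 := by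
  have h2σ : (2*σ) ≠ 0 := by positivity
  have hpt : ∀ x : ℝ, Real.sqrt (4*σ^2 - x^2) = 2*σ*Real.sqrt (1 - (x/(2*σ))^2) := by
    intro x
    rw [show (4*σ^2 - x^2) = (2*σ)^2 * (1 - (x/(2*σ))^2) by field_simp; ring,
      Real.sqrt_mul (by positivity), Real.sqrt_sq (by positivity)]
  simp_rw [hpt]
  rw [intervalIntegral.integral_comp_div (f := fun y : ℝ => 2*σ*Real.sqrt (1 - y^2)) h2σ]
  rw [show -(2*σ)/(2*σ) = (-1 : ℝ) by field_simp, show (2*σ)/(2*σ) = (1:ℝ) by field_simp]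
  rw [intervalIntegral.integral_const_mul, integral_sqrt_one_sub_sq]
  simp [smul_eq_mul]
  ring

lemma ode (σ : ℝ) (hσ : 0 < σ) (z : ℂ) (hz : 0 < z.im) :
    (4*(σ:ℂ)^2 - z^2) * SCI2 σ z = z * SCI σ z - 4*π*σ^2 := by
  have hle : -(2*σ) ≤ 2*σ := by linarith
  -- integrability of basic pieces
  have i1 : IntervalIntegrable (fun x : ℝ => (Real.sqrt (4*σ^2 - x^2) : ℂ) * ((z - x)^2)⁻¹)
      volume (-(2*σ)) (2*σ) := (contF2 hz σ).intervalIntegrable _ _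
  have i2 : IntervalIntegrable (fun x : ℝ => (Real.sqrt (4*σ^2 - x^2) : ℂ) * (z - x)⁻¹)
      volume (-(2*σ)) (2*σ) := (contF hz σ).intervalIntegrable _ _
  have csq : Continuous (fun x : ℝ => (Real.sqrt (4*σ^2 - x^2) : ℂ)) :=
    Complex.continuous_ofReal.comp (Real.continuous_sqrt.comp (by continuity))
  have i3 : IntervalIntegrable (fun x : ℝ => (x:ℂ) * ((Real.sqrt (4*σ^2 - x^2) : ℂ) * (z - x)⁻¹))
      volume (-(2*σ)) (2*σ) := (Complex.continuous_ofReal.mul (contF hz σ)).intervalIntegrable _ _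
  -- integration by parts
  have hu : ∀ x ∈ Set.uIcc (-(2*σ)) (2*σ),
      HasDerivAt (fun x : ℝ => (((4*σ^2 - x^2) ^ ((3:ℝ)/2) : ℝ) : ℂ))
        (((-3*x*Real.sqrt (4*σ^2 - x^2) : ℝ) : ℂ)) x := by
    intro x _
    have h1 : HasDerivAt (fun x : ℝ => 4*σ^2 - x^2) (-(2*x)) x := by
      simpa using (hasDerivAt_pow 2 x).const_sub (4*σ^2)
    have h2 := (h1.rpow_const (p := (3:ℝ)/2) (Or.inr (by norm_num))).ofReal_comp
    convert h2 using 2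
    rw [show (3:ℝ)/2 - 1 = 1/2 by norm_num, ← Real.sqrt_eq_rpow]
    ring
  have hv : ∀ x ∈ Set.uIcc (-(2*σ)) (2*σ),
      HasDerivAt (fun x : ℝ => (z - (x:ℂ))⁻¹) (((z - x)^2)⁻¹) x := by
    intro x _
    have h := (((hasDerivAt_id ((x:ℝ):ℂ)).const_sub z).inv (sub_ofReal_ne hz x)).comp_ofReal
    refine h.congr_deriv ?_
    simp [id]
  have hu'int : IntervalIntegrable (fun x : ℝ => ((-3*x*Real.sqrt (4*σ^2 - x^2) : ℝ) : ℂ))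
      volume (-(2*σ)) (2*σ) := by
    apply Continuous.intervalIntegrable
    exact Complex.continuous_ofReal.comp
      ((continuous_const.mul continuous_id).mul (Real.continuous_sqrt.comp (by continuity)))
  have hv'int : IntervalIntegrable (fun x : ℝ => ((z - (x:ℂ))^2)⁻¹) volume (-(2*σ)) (2*σ) := by
    apply Continuous.intervalIntegrable
    exact Continuous.inv₀ (by continuity) (fun x => pow_ne_zero _ (sub_ofReal_ne hz x))
  have E1 := intervalIntegral.integral_mul_deriv_eq_deriv_mul hu hv hu'int hv'int
  have hb1 : (((4*σ^2 - (2*σ)^2) ^ ((3:ℝ)/2) : ℝ) : ℂ) = 0 := by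
    rw [show 4*σ^2 - (2*σ)^2 = (0:ℝ) by ring, Real.zero_rpow (by norm_num)]
    simp
  have hb2 : (((4*σ^2 - (-(2*σ))^2) ^ ((3:ℝ)/2) : ℝ) : ℂ) = 0 := by
    rw [show 4*σ^2 - (-(2*σ))^2 = (0:ℝ) by ring, Real.zero_rpow (by norm_num)]
    simp
  rw [hb1, hb2, zero_mul, zero_mul, sub_zero, zero_sub] at E1
  -- rewrite the left side of E1
  have hsq : ∀ x ∈ Set.uIcc (-(2*σ)) (2*σ),
      (((4*σ^2 - x^2) ^ ((3:ℝ)/2) : ℝ) : ℂ)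
        = (4*(σ:ℂ)^2 - (x:ℂ)^2) * (Real.sqrt (4*σ^2 - x^2) : ℂ) := by
    intro x hx
    rw [Set.uIcc_of_le hle] at hx
    obtain ⟨hx1, hx2⟩ := hx
    have hnn : (0:ℝ) ≤ 4*σ^2 - x^2 := by nlinarith
    have hr : (4*σ^2 - x^2) ^ ((3:ℝ)/2) = (4*σ^2 - x^2) * Real.sqrt (4*σ^2 - x^2) := by
      rw [show (3:ℝ)/2 = (1/2)*3 by norm_num, Real.rpow_mul hnn, ← Real.sqrt_eq_rpow,
        show (3:ℝ) = ((3:ℕ):ℝ) by norm_num, Real.rpow_natCast, pow_succ,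
        Real.sq_sqrt hnn]
    rw [hr]
    push_cast
    ring
  have EL : (∫ x in (-(2*σ))..(2*σ),
        (((4*σ^2 - x^2) ^ ((3:ℝ)/2) : ℝ) : ℂ) * ((z - x)^2)⁻¹)
      = (4*(σ:ℂ)^2 - z^2) * SCI2 σ z
        + (z * SCI σ z
          + ∫ x in (-(2*σ))..(2*σ), (x:ℂ) * ((Real.sqrt (4*σ^2 - x^2) : ℂ) * (z - x)⁻¹)) := by
    have hpt : Set.EqOn
        (fun x : ℝ => (((4*σ^2 - x^2) ^ ((3:ℝ)/2) : ℝ) : ℂ) * ((z - x)^2)⁻¹)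
        (fun x : ℝ => (4*(σ:ℂ)^2 - z^2) * ((Real.sqrt (4*σ^2 - x^2) : ℂ) * ((z - x)^2)⁻¹)
          + (z * ((Real.sqrt (4*σ^2 - x^2) : ℂ) * (z - x)⁻¹)
            + (x:ℂ) * ((Real.sqrt (4*σ^2 - x^2) : ℂ) * (z - x)⁻¹)))
        (Set.uIcc (-(2*σ)) (2*σ)) := by
      intro x hx
      have hne := sub_ofReal_ne hz x
      beta_reduce
      rw [hsq x hx]
      field_simp
      ring
    rw [intervalIntegral.integral_congr hpt,
      intervalIntegral.integral_add (i1.const_mul _) ((i2.const_mul z).add i3),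
      intervalIntegral.integral_add (i2.const_mul z) i3,
      intervalIntegral.integral_const_mul, intervalIntegral.integral_const_mul]
    rfl
  have ER : (∫ x in (-(2*σ))..(2*σ),
        ((-3*x*Real.sqrt (4*σ^2 - x^2) : ℝ) : ℂ) * (z - x)⁻¹)
      = (-3) * ∫ x in (-(2*σ))..(2*σ), (x:ℂ) * ((Real.sqrt (4*σ^2 - x^2) : ℂ) * (z - x)⁻¹) := by
    rw [← intervalIntegral.integral_const_mul]
    apply intervalIntegral.integral_congr
    intro x _
    push_cast
    ring
  rw [EL, ER] at E1
  -- the J identity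
  have hJ : (∫ x in (-(2*σ))..(2*σ), (x:ℂ) * ((Real.sqrt (4*σ^2 - x^2) : ℂ) * (z - x)⁻¹))
      = z * SCI σ z - ((2*π*σ^2 : ℝ) : ℂ) := by
    have hptJ : Set.EqOn
        (fun x : ℝ => (x:ℂ) * ((Real.sqrt (4*σ^2 - x^2) : ℂ) * (z - x)⁻¹))
        (fun x : ℝ => z * ((Real.sqrt (4*σ^2 - x^2) : ℂ) * (z - x)⁻¹)
          - (Real.sqrt (4*σ^2 - x^2) : ℂ))
        (Set.uIcc (-(2*σ)) (2*σ)) := by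
      intro x _
      have hne := sub_ofReal_ne hz x
      beta_reduce
      field_simp
      ring
    rw [intervalIntegral.integral_congr hptJ,
      intervalIntegral.integral_sub (i2.const_mul z) (csq.intervalIntegrable _ _),
      intervalIntegral.integral_const_mul, intervalIntegral.integral_ofReal, mass σ hσ]
    rfl
  rw [hJ] at E1
  push_cast at E1 ⊢
  linear_combination E1

noncomputable def Gfun (σ : ℝ) (z : ℂ) : ℂ := (((2*π*σ^2)⁻¹:ℝ):ℂ) * SCI σ z

noncomputable def Hfun (σ : ℝ) (z : ℂ) : ℂ :=
  ((σ:ℂ)^2 * (Gfun σ z)^2 - z * Gfun σ z + 1) / (4*(σ:ℂ)^2 - z^2)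

lemma denom_ne (σ : ℝ) (hσ : 0 < σ) {w : ℂ} (hw : 0 < w.im) : 4*(σ:ℂ)^2 - w^2 ≠ 0 := by
  intro h
  have h0 : (w - 2*σ)*(w + 2*σ) = 0 := by linear_combination -h
  rcases mul_eq_zero.1 h0 with h1 | h1
  · have := congrArg Complex.im h1
    simp at this
    linarith
  · have := congrArg Complex.im h1
    simp at this
    linarith

lemma hasDerivAt_G (σ : ℝ) (hσ : 0 < σ) (z : ℂ) (hz : 0 < z.im) :
    HasDerivAt (Gfun σ) (-((((2*π*σ^2)⁻¹:ℝ):ℂ) * SCI2 σ z)) z := by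
  have h := (hasDerivAt_SCI σ hσ.le z hz).const_mul ((((2*π*σ^2)⁻¹:ℝ):ℂ))
  refine h.congr_deriv ?_
  ring

lemma G_ode (σ : ℝ) (hσ : 0 < σ) (z : ℂ) (hz : 0 < z.im) :
    (4*(σ:ℂ)^2 - z^2) * (-((((2*π*σ^2)⁻¹:ℝ):ℂ) * SCI2 σ z)) = 2 - z * Gfun σ z := by
  have h := ode σ hσ z hz
  have hc0 : ((2*π*σ^2 : ℝ):ℂ) ≠ 0 := Complex.ofReal_ne_zero.2 (by positivity)
  rw [Gfun, Complex.ofReal_inv]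
  push_cast at h hc0 ⊢
  have hπ0 : (π:ℂ) ≠ 0 := Complex.ofReal_ne_zero.2 pi_pos.ne'
  have hσ0 : (σ:ℂ) ≠ 0 := Complex.ofReal_ne_zero.2 hσ.ne'
  field_simp
  linear_combination (-1 : ℂ) * h

lemma hasDerivAt_H (σ : ℝ) (hσ : 0 < σ) (z : ℂ) (hz : 0 < z.im) :
    HasDerivAt (Hfun σ) 0 z := by
  have hG := hasDerivAt_G σ hσ z hz
  set G' := -((((2*π*σ^2)⁻¹:ℝ):ℂ) * SCI2 σ z) with hG'
  have hN : HasDerivAt (fun w => (σ:ℂ)^2 * (Gfun σ w)^2 - w * Gfun σ w + 1)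
      ((σ:ℂ)^2 * (2*(Gfun σ z)*G') - (Gfun σ z + z*G')) z := by
    apply HasDerivAt.add_const
    apply HasDerivAt.sub
    · have h1 := (hG.pow 2).const_mul ((σ:ℂ)^2)
      refine h1.congr_deriv ?_
      ring
    · have h2 := (hasDerivAt_id z).mul hG
      refine h2.congr_deriv ?_
      simp only [id_eq]
      ring
  have hD : HasDerivAt (fun w : ℂ => 4*(σ:ℂ)^2 - w^2) (-(2*z)) z := by
    simpa using (hasDerivAt_pow 2 z).const_sub (4*(σ:ℂ)^2)
  have hdiv := hN.div hD (denom_ne σ hσ hz)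
  have : Hfun σ = fun w => ((σ:ℂ)^2 * (Gfun σ w)^2 - w * Gfun σ w + 1) / (4*(σ:ℂ)^2 - w^2) := rfl
  rw [this]
  refine hdiv.congr_deriv (Eq.symm ?_)
  rw [eq_comm, div_eq_zero_iff]
  left
  linear_combination (2*(σ:ℂ)^2*(Gfun σ z) - z) * G_ode σ hσ z hz

lemma norm_G_le (σ : ℝ) (hσ : 0 < σ) (t : ℝ) (ht : 1 ≤ t) :
    ‖Gfun σ ((t:ℂ)*Complex.I)‖ ≤ 4/(π*t) := by
  have htpos : 0 < t := by linarith
  have him : ((t:ℂ)*Complex.I).im = t := by simp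
  have hbound : ∀ x ∈ Set.uIoc (-(2*σ)) (2*σ),
      ‖(Real.sqrt (4*σ^2 - x^2) : ℂ) * ((t:ℂ)*Complex.I - x)⁻¹‖ ≤ 2*σ/t := by
    intro x _
    rw [norm_mul, norm_inv, Complex.norm_real, Real.norm_eq_abs,
      abs_of_nonneg (Real.sqrt_nonneg _)]
    have h1 : Real.sqrt (4*σ^2 - x^2) ≤ 2*σ := sqrt_le hσ.le
    have h2 : t ≤ ‖(t:ℂ)*Complex.I - x‖ := by
      calc t = ((t:ℂ)*Complex.I - x).im := by simp
        _ ≤ ‖(t:ℂ)*Complex.I - x‖ := im_le_norm _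
    rw [div_eq_mul_inv]
    apply mul_le_mul h1 _ (by positivity) (by positivity)
    rw [inv_le_inv₀ (by linarith) htpos]
    exact h2
  have h3 := intervalIntegral.norm_integral_le_of_norm_le_const hbound
  have h4 : ‖SCI σ ((t:ℂ)*Complex.I)‖ ≤ 2*σ/t * |2*σ - -(2*σ)| := h3
  have h5 : |2*σ - -(2*σ)| = 4*σ := by rw [abs_of_nonneg (by linarith)]; ring
  rw [Gfun, norm_mul, Complex.norm_real, Real.norm_eq_abs, abs_of_nonneg (by positivity)]
  calc (2*π*σ^2)⁻¹ * ‖SCI σ ((t:ℂ)*Complex.I)‖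
      ≤ (2*π*σ^2)⁻¹ * (2*σ/t * (4*σ)) := by
        apply mul_le_mul_of_nonneg_left _ (by positivity)
        rw [← h5]; exact h4
    _ = 4/(π*t) := by field_simp

lemma H_zero (σ : ℝ) (hσ : 0 < σ) (z : ℂ) (hz : 0 < z.im) : Hfun σ z = 0 := by
  set s : Set ℂ := {w : ℂ | 0 < w.im} with hs
  have hconv : Convex ℝ s := convex_halfSpace_im_gt 0
  have hopen : IsOpen s := isOpen_lt continuous_const Complex.continuous_im
  have hdiff : DifferentiableOn ℂ (Hfun σ) s :=
    fun w hw => ((hasDerivAt_H σ hσ w hw).differentiableAt).differentiableWithinAt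
  have hfd : ∀ w ∈ s, fderivWithin ℂ (Hfun σ) s w = 0 := by
    intro w hw
    rw [fderivWithin_of_isOpen hopen hw, ((hasDerivAt_H σ hσ w hw).hasFDerivAt).fderiv]
    ext v
    simp
  set B : ℝ := σ^2*(4/π)^2 + 4/π + 1 with hB
  have hBpos : 0 < B := by positivity
  have hconst : ∀ t : ℝ, 1 ≤ t → Hfun σ z = Hfun σ ((t:ℂ)*Complex.I) := by
    intro t ht
    exact hconv.is_const_of_fderivWithin_eq_zero hdiff hfd hz (by simp [hs]; linarith)
  have hbound : ∀ t : ℝ, 1 ≤ t → ‖Hfun σ z‖ ≤ B / t := by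
    intro t ht
    have htpos : 0 < t := by linarith
    rw [hconst t ht, Hfun, norm_div]
    have hG := norm_G_le σ hσ t ht
    have hGle : ‖Gfun σ ((t:ℂ)*Complex.I)‖ ≤ 4/π := by
      calc ‖Gfun σ ((t:ℂ)*Complex.I)‖ ≤ 4/(π*t) := hG
        _ ≤ 4/π := by
            apply div_le_div_of_nonneg_left (by norm_num) (by positivity)
            nlinarith [pi_pos]
    have htG : ‖(t:ℂ)*Complex.I‖ * ‖Gfun σ ((t:ℂ)*Complex.I)‖ ≤ 4/π := by
      have hnt : ‖(t:ℂ)*Complex.I‖ = t := by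
        simp [abs_of_nonneg htpos.le]
      rw [hnt]
      calc t * ‖Gfun σ ((t:ℂ)*Complex.I)‖ ≤ t * (4/(π*t)) := by
            exact mul_le_mul_of_nonneg_left hG htpos.le
        _ = 4/π := by field_simp
    have hnum : ‖(σ:ℂ)^2 * (Gfun σ ((t:ℂ)*Complex.I))^2 - ((t:ℂ)*Complex.I) * Gfun σ ((t:ℂ)*Complex.I) + 1‖ ≤ B := by
      calc ‖(σ:ℂ)^2 * (Gfun σ ((t:ℂ)*Complex.I))^2 - ((t:ℂ)*Complex.I) * Gfun σ ((t:ℂ)*Complex.I) + 1‖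
          ≤ ‖(σ:ℂ)^2 * (Gfun σ ((t:ℂ)*Complex.I))^2 - ((t:ℂ)*Complex.I) * Gfun σ ((t:ℂ)*Complex.I)‖ + ‖(1:ℂ)‖ := norm_add_le _ _
        _ ≤ ‖(σ:ℂ)^2 * (Gfun σ ((t:ℂ)*Complex.I))^2‖ + ‖((t:ℂ)*Complex.I) * Gfun σ ((t:ℂ)*Complex.I)‖ + ‖(1:ℂ)‖ := by
            have := norm_sub_le ((σ:ℂ)^2 * (Gfun σ ((t:ℂ)*Complex.I))^2) (((t:ℂ)*Complex.I) * Gfun σ ((t:ℂ)*Complex.I))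
            linarith
        _ ≤ σ^2*(4/π)^2 + 4/π + 1 := by
            have e1 : ‖(σ:ℂ)^2 * (Gfun σ ((t:ℂ)*Complex.I))^2‖ ≤ σ^2*(4/π)^2 := by
              rw [norm_mul, norm_pow, norm_pow, Complex.norm_real, Real.norm_eq_abs,
                sq_abs]
              apply mul_le_mul_of_nonneg_left _ (by positivity)
              exact pow_le_pow_left₀ (norm_nonneg _) hGle 2
            have e2 : ‖((t:ℂ)*Complex.I) * Gfun σ ((t:ℂ)*Complex.I)‖ ≤ 4/π := by
              rw [norm_mul]; exact htG
            simp only [norm_one]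
            linarith
    have hden : t^2 ≤ ‖4*(σ:ℂ)^2 - ((t:ℂ)*Complex.I)^2‖ := by
      have : 4*(σ:ℂ)^2 - ((t:ℂ)*Complex.I)^2 = ((4*σ^2 + t^2 : ℝ) : ℂ) := by
        push_cast
        ring_nf
        simp [Complex.I_sq]
      rw [this, Complex.norm_real, Real.norm_eq_abs, abs_of_nonneg (by positivity)]
      nlinarith
    calc ‖(σ:ℂ)^2 * (Gfun σ ((t:ℂ)*Complex.I))^2 - ((t:ℂ)*Complex.I) * Gfun σ ((t:ℂ)*Complex.I) + 1‖ / ‖4*(σ:ℂ)^2 - ((t:ℂ)*Complex.I)^2‖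
        ≤ B / t^2 := by
          apply div_le_div₀ hBpos.le hnum (by positivity) hden
      _ ≤ B / t := by
          apply div_le_div_of_nonneg_left hBpos.le htpos
          nlinarith
  have hlim : Filter.Tendsto (fun t : ℝ => B / t) Filter.atTop (nhds 0) := by
    simpa [div_eq_mul_inv] using Filter.Tendsto.const_mul B tendsto_inv_atTop_zero
  have hle0 : ‖Hfun σ z‖ ≤ 0 := by
    apply ge_of_tendsto hlim
    filter_upwards [Filter.eventually_ge_atTop 1] with t ht
    exact hbound t ht
  simpa using le_antisymm hle0 (norm_nonneg _)

/-- The Stieltjes transform of the semicircle law satisfies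
`σ² g(z)² − z g(z) + 1 = 0` on the upper half-plane. -/
theorem stmt_2 (σ : ℝ) (hσ : 0 < σ) (z : ℂ) (hz : 0 < z.im) :
    σ^2 * (∫ x, (z - (x:ℂ))⁻¹ ∂(semicircle σ))^2
      - z * (∫ x, (z - (x:ℂ))⁻¹ ∂(semicircle σ)) + 1 = 0 := by
  have h0 := H_zero σ hσ z hz
  rw [Hfun, div_eq_zero_iff] at h0
  have hN : (σ:ℂ)^2 * (Gfun σ z)^2 - z * Gfun σ z + 1 = 0 := by
    rcases h0 with h | h
    · exact h
    · exact absurd h (denom_ne σ hσ hz)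
  rw [sc_eq σ hσ z hz]
  rw [Gfun] at hN
  push_cast at hN ⊢
  linear_combination hN
end

section
/- For each z ∈ ℂ⁺ and σ > 0 and any compactly supported probability measure ν on ℝ, there exists a unique g ∈ ℂ with Im g < 0 satisfying g = ∫ 1/(z − σ² g − t) dν(t). -/
open MeasureTheory Complex

namespace Stmt13

variable {ν : Measure ℝ} [IsProbabilityMeasure ν] {σ : ℝ} {z g : ℂ} {K : Set ℝ}

/-- The denominator. -/
noncomputable def A (σ : ℝ) (z g : ℂ) (t : ℝ) : ℂ := z - σ^2 * g - t

/-- The fixed point map. -/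
noncomputable def F (ν : Measure ℝ) (σ : ℝ) (z : ℂ) (g : ℂ) : ℂ :=
  ∫ t, (A σ z g t)⁻¹ ∂ν

/-- The second-moment integral. -/
noncomputable def Ig (ν : Measure ℝ) (σ : ℝ) (z : ℂ) (g : ℂ) : ℝ :=
  ∫ t, (normSq (A σ z g t))⁻¹ ∂ν

lemma A_im (g : ℂ) (t : ℝ) : (A σ z g t).im = z.im - σ^2 * g.im := by
  simp [A, Complex.ofReal_pow]
  norm_num [pow_two, Complex.mul_im]

lemma A_im_pos (hz : 0 < z.im) (hg : g.im ≤ 0) (t : ℝ) : 0 < (A σ z g t).im := by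
  rw [A_im]
  nlinarith [sq_nonneg σ]

lemma A_ne_zero (hz : 0 < z.im) (hg : g.im ≤ 0) (t : ℝ) : A σ z g t ≠ 0 := by
  intro h
  have := A_im_pos (σ := σ) hz hg t
  rw [h] at this; simp at this

lemma im_le_normSq_A (g : ℂ) (t : ℝ) :
    (z.im - σ^2 * g.im)^2 ≤ normSq (A σ z g t) := by
  have := A_im (σ := σ) (z := z) g t
  rw [normSq_apply, ← this]
  nlinarith [sq_nonneg (A σ z g t).re]

lemma norm_A_ge (hz : 0 < z.im) (hg : g.im ≤ 0) (t : ℝ) :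
    z.im - σ^2 * g.im ≤ ‖A σ z g t‖ := by
  have h1 : z.im - σ^2 * g.im ≤ |(A σ z g t).im| := by
    rw [A_im]; exact le_abs_self _
  exact h1.trans (Complex.abs_im_le_norm _)

lemma norm_inv_A_le (hz : 0 < z.im) (hg : g.im ≤ 0) (t : ℝ) :
    ‖(A σ z g t)⁻¹‖ ≤ (z.im - σ^2 * g.im)⁻¹ := by
  have hpos : 0 < z.im - σ^2 * g.im := by nlinarith [sq_nonneg σ]
  rw [norm_inv]
  exact inv_anti₀ hpos (norm_A_ge hz hg t)

lemma continuous_A (g : ℂ) : Continuous (fun t : ℝ => A σ z g t) := by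
  unfold A; fun_prop

lemma integrable_inv_A (hz : 0 < z.im) (hg : g.im ≤ 0) :
    Integrable (fun t => (A σ z g t)⁻¹) ν := by
  have hc : Continuous (fun t : ℝ => (A σ z g t)⁻¹) :=
    (continuous_A g).inv₀ (fun t => A_ne_zero hz hg t)
  exact (integrable_const ((z.im - σ^2 * g.im)⁻¹)).mono' hc.aestronglyMeasurable
    (ae_of_all _ fun t => by simpa using norm_inv_A_le hz hg t)

lemma integrable_inv_normSq_A (hz : 0 < z.im) (hg : g.im ≤ 0) :
    Integrable (fun t => (normSq (A σ z g t))⁻¹) ν := by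
  have hpos : 0 < z.im - σ^2 * g.im := by nlinarith [sq_nonneg σ]
  have hc : Continuous (fun t : ℝ => (normSq (A σ z g t))⁻¹) := by
    apply Continuous.inv₀ (Complex.continuous_normSq.comp (continuous_A g))
    intro t
    have h1 := im_le_normSq_A (σ := σ) (z := z) g t
    have h2 : 0 < z.im - σ^2 * g.im := by nlinarith [sq_nonneg σ]
    intro h0
    simp only [Function.comp_apply] at h0
    nlinarith
  refine (integrable_const (((z.im - σ^2 * g.im)^2)⁻¹)).mono' hc.aestronglyMeasurable
    (ae_of_all _ fun t => ?_)
  have h1 := im_le_normSq_A (σ := σ) (z := z) g t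
  rw [Real.norm_eq_abs, _root_.abs_of_nonneg (inv_nonneg.2 (normSq_nonneg _))]
  exact inv_anti₀ (by positivity) h1

lemma im_F (hz : 0 < z.im) (hg : g.im ≤ 0) :
    (F ν σ z g).im = -((z.im - σ^2 * g.im) * Ig ν σ z g) := by
  have h1 : (F ν σ z g).im = ∫ t, ((A σ z g t)⁻¹).im ∂ν :=
    (integral_im (integrable_inv_A hz hg)).symm
  rw [h1]
  have h2 : ∀ t : ℝ, ((A σ z g t)⁻¹).im
      = -(z.im - σ^2 * g.im) * (normSq (A σ z g t))⁻¹ := by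
    intro t
    rw [Complex.inv_im, A_im]
    ring
  simp only [h2]
  rw [integral_const_mul]
  unfold Ig
  ring

lemma norm_F_le (hz : 0 < z.im) (hg : g.im ≤ 0) :
    ‖F ν σ z g‖ ≤ (z.im - σ^2 * g.im)⁻¹ := by
  have := norm_integral_le_of_norm_le_const
    (μ := ν) (C := (z.im - σ^2 * g.im)⁻¹) (f := fun t => (A σ z g t)⁻¹)
    (ae_of_all _ fun t => norm_inv_A_le hz hg t)
  simpa [F] using this

/-- Cauchy–Schwarz for nonnegative real integrands. -/
lemma cs_integral {μ : Measure ℝ} (f h : ℝ → ℝ) (hf : ∀ t, 0 ≤ f t) (hh : ∀ t, 0 ≤ h t)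
    (hf2 : Integrable (fun t => f t ^ 2) μ) (hh2 : Integrable (fun t => h t ^ 2) μ)
    (hfh : Integrable (fun t => f t * h t) μ)
    (hA : 0 < ∫ t, f t ^ 2 ∂μ) (hB : 0 < ∫ t, h t ^ 2 ∂μ) :
    ∫ t, f t * h t ∂μ ≤ Real.sqrt ((∫ t, f t ^ 2 ∂μ) * (∫ t, h t ^ 2 ∂μ)) := by
  set Av := ∫ t, f t ^ 2 ∂μ with hAv
  set Bv := ∫ t, h t ^ 2 ∂μ with hBv
  set l : ℝ := Real.sqrt Bv / Real.sqrt Av with hl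
  have hl0 : 0 < l := div_pos (Real.sqrt_pos.2 hB) (Real.sqrt_pos.2 hA)
  have key : ∀ t, f t * h t ≤ (l / 2) * f t ^ 2 + (1 / (2 * l)) * h t ^ 2 := by
    intro t
    have h0 : 0 ≤ (l * f t - h t) ^ 2 / l := by positivity
    have he : (l / 2) * f t ^ 2 + (1 / (2 * l)) * h t ^ 2 - f t * h t
        = (l * f t - h t) ^ 2 / (2 * l) := by
      field_simp
      ring
    nlinarith [div_nonneg (sq_nonneg (l * f t - h t)) (by linarith : (0:ℝ) ≤ 2 * l)]
  have hint : ∫ t, f t * h t ∂μ ≤ ∫ t, ((l / 2) * f t ^ 2 + (1 / (2 * l)) * h t ^ 2) ∂μ :=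
    integral_mono hfh ((hf2.const_mul _).add (hh2.const_mul _)) key
  rw [integral_add (hf2.const_mul _) (hh2.const_mul _), integral_const_mul,
    integral_const_mul] at hint
  have hfin : (l / 2) * Av + (1 / (2 * l)) * Bv = Real.sqrt (Av * Bv) := by
    rw [Real.sqrt_mul hA.le]
    have hA' : Av = Real.sqrt Av * Real.sqrt Av := (Real.mul_self_sqrt hA.le).symm
    have hB' : Bv = Real.sqrt Bv * Real.sqrt Bv := (Real.mul_self_sqrt hB.le).symm
    have hsA : (0:ℝ) < Real.sqrt Av := Real.sqrt_pos.2 hA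
    have hsB : (0:ℝ) < Real.sqrt Bv := Real.sqrt_pos.2 hB
    rw [hl]
    field_simp
    nlinarith [hA', hB']
  linarith [hint, hfin.le, hfin.ge]

lemma integrable_prod_inv (hz : 0 < z.im) (hg : g.im ≤ 0) {h : ℂ} (hh : h.im ≤ 0) :
    Integrable (fun t => ‖(A σ z g t)⁻¹‖ * ‖(A σ z h t)⁻¹‖) ν := by
  have hc : Continuous (fun t : ℝ => ‖(A σ z g t)⁻¹‖ * ‖(A σ z h t)⁻¹‖) := by
    apply Continuous.mul
    · exact ((continuous_A g).inv₀ (fun t => A_ne_zero hz hg t)).norm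
    · exact ((continuous_A h).inv₀ (fun t => A_ne_zero hz hh t)).norm
  have hy : 0 < z.im - σ^2 * g.im := by nlinarith [sq_nonneg σ]
  have hy' : 0 < z.im - σ^2 * h.im := by nlinarith [sq_nonneg σ]
  refine (integrable_const ((z.im - σ^2 * g.im)⁻¹ * (z.im - σ^2 * h.im)⁻¹)).mono'
    hc.aestronglyMeasurable (ae_of_all _ fun t => ?_)
  rw [Real.norm_eq_abs, _root_.abs_of_nonneg (by positivity)]
  exact mul_le_mul (norm_inv_A_le hz hg t) (norm_inv_A_le hz hh t) (norm_nonneg _)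
    (by positivity)

lemma sq_norm_inv_A (g : ℂ) (t : ℝ) :
    ‖(A σ z g t)⁻¹‖ ^ 2 = (normSq (A σ z g t))⁻¹ := by
  rw [norm_inv, ← Complex.sq_norm, inv_pow]

/-- The key difference estimate. -/
lemma F_sub_le (hz : 0 < z.im) (hg : g.im ≤ 0) {h : ℂ} (hh : h.im ≤ 0)
    (hIg : 0 < Ig ν σ z g) (hIh : 0 < Ig ν σ z h) :
    ‖F ν σ z g - F ν σ z h‖
      ≤ σ^2 * ‖g - h‖ * Real.sqrt (Ig ν σ z g * Ig ν σ z h) := by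
  have hdiff : F ν σ z g - F ν σ z h
      = (σ^2 : ℂ) * (g - h) * ∫ t, (A σ z g t)⁻¹ * (A σ z h t)⁻¹ ∂ν := by
    rw [F, F, ← integral_sub (integrable_inv_A hz hg) (integrable_inv_A hz hh),
      ← integral_const_mul]
    congr 1
    ext t
    have h1 := A_ne_zero (σ := σ) hz hg t
    have h2 := A_ne_zero (σ := σ) hz hh t
    field_simp
    unfold A
    ring
  rw [hdiff]
  have hbound : ‖∫ t, (A σ z g t)⁻¹ * (A σ z h t)⁻¹ ∂ν‖
      ≤ Real.sqrt (Ig ν σ z g * Ig ν σ z h) := by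
    refine le_trans (norm_integral_le_integral_norm _) ?_
    have : ∀ t, ‖(A σ z g t)⁻¹ * (A σ z h t)⁻¹‖ = ‖(A σ z g t)⁻¹‖ * ‖(A σ z h t)⁻¹‖ :=
      fun t => norm_mul _ _
    simp only [this]
    have := cs_integral (μ := ν) (fun t => ‖(A σ z g t)⁻¹‖) (fun t => ‖(A σ z h t)⁻¹‖)
      (fun t => norm_nonneg _) (fun t => norm_nonneg _)
      (by simpa only [sq_norm_inv_A] using integrable_inv_normSq_A hz hg)
      (by simpa only [sq_norm_inv_A] using integrable_inv_normSq_A hz hh)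
      (integrable_prod_inv hz hg hh)
      (by simpa only [sq_norm_inv_A, Ig] using hIg)
      (by simpa only [sq_norm_inv_A, Ig] using hIh)
    simpa only [sq_norm_inv_A, Ig] using this
  calc ‖(σ^2 : ℂ) * (g - h) * ∫ t, (A σ z g t)⁻¹ * (A σ z h t)⁻¹ ∂ν‖
      = σ^2 * ‖g - h‖ * ‖∫ t, (A σ z g t)⁻¹ * (A σ z h t)⁻¹ ∂ν‖ := by
        rw [norm_mul, norm_mul]
        norm_num [sq_nonneg σ, _root_.abs_of_nonneg (sq_nonneg σ)]
    _ ≤ σ^2 * ‖g - h‖ * Real.sqrt (Ig ν σ z g * Ig ν σ z h) := by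
        apply mul_le_mul_of_nonneg_left hbound (by positivity)

lemma abs_A_le (g : ℂ) (t : ℝ) :
    ‖A σ z g t‖ ≤ ‖z‖ + σ^2 * ‖g‖ + |t| := by
  unfold A
  calc ‖z - (σ:ℂ)^2 * g - (t:ℂ)‖ ≤ ‖z - (σ:ℂ)^2 * g‖ + ‖(t:ℂ)‖ := norm_sub_le _ _
    _ ≤ ‖z‖ + ‖(σ:ℂ)^2 * g‖ + ‖(t:ℂ)‖ := add_le_add_left (norm_sub_le _ _) _
    _ = ‖z‖ + σ^2 * ‖g‖ + |t| := by
        rw [norm_mul, Complex.norm_real]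
        norm_num [← Complex.ofReal_pow, Complex.norm_real,
          _root_.abs_of_nonneg (sq_nonneg σ)]

lemma Ig_ge {M : ℝ} (hM0 : 0 ≤ M) (hM : ∀ t ∈ K, |t| ≤ M) (hae : ∀ᵐ t ∂ν, t ∈ K)
    (hz : 0 < z.im) (hg : g.im ≤ 0) :
    ((‖z‖ + σ^2 * ‖g‖ + M)^2)⁻¹ ≤ Ig ν σ z g := by
  have hzn : 0 < ‖z‖ := by
    have : z.im ≤ ‖z‖ := le_trans (le_abs_self _) (Complex.abs_im_le_norm z)
    linarith
  have hden : 0 < ‖z‖ + σ^2 * ‖g‖ + M := by positivity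
  have hpt : ∀ t ∈ K, ((‖z‖ + σ^2 * ‖g‖ + M)^2)⁻¹ ≤ (normSq (A σ z g t))⁻¹ := by
    intro t ht
    have h1 : ‖A σ z g t‖ ≤ ‖z‖ + σ^2 * ‖g‖ + M :=
      (abs_A_le g t).trans (by linarith [hM t ht])
    have h2 : normSq (A σ z g t) ≤ (‖z‖ + σ^2 * ‖g‖ + M)^2 := by
      rw [← Complex.sq_norm]
      exact pow_le_pow_left₀ (norm_nonneg _) h1 2
    have h3 : 0 < normSq (A σ z g t) := by
      have hy : 0 < z.im - σ^2 * g.im := by nlinarith [sq_nonneg σ]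
      nlinarith [im_le_normSq_A (σ := σ) (z := z) g t, mul_pos hy hy]
    exact inv_anti₀ h3 h2
  have := integral_mono_ae (integrable_const (((‖z‖ + σ^2 * ‖g‖ + M)^2)⁻¹))
    (integrable_inv_normSq_A hz hg) (hae.mono fun t ht => hpt t ht)
  simpa [Ig] using this

lemma Ig_le (hz : 0 < z.im) (hg : g.im ≤ 0) :
    Ig ν σ z g ≤ ((z.im - σ^2 * g.im)^2)⁻¹ := by
  have hy : 0 < z.im - σ^2 * g.im := by nlinarith [sq_nonneg σ]
  have hpt : ∀ t : ℝ, (normSq (A σ z g t))⁻¹ ≤ ((z.im - σ^2 * g.im)^2)⁻¹ :=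
    fun t => inv_anti₀ (by positivity) (im_le_normSq_A g t)
  have := integral_mono (μ := ν) (integrable_inv_normSq_A hz hg)
    (integrable_const (((z.im - σ^2 * g.im)^2)⁻¹)) hpt
  simpa [Ig] using this

lemma F_lip (hz : 0 < z.im) (hg : g.im ≤ 0) {h : ℂ} (hh : h.im ≤ 0)
    (hIg : 0 < Ig ν σ z g) (hIh : 0 < Ig ν σ z h) :
    ‖F ν σ z g - F ν σ z h‖ ≤ σ^2 / z.im^2 * ‖g - h‖ := by
  refine (F_sub_le hz hg hh hIg hIh).trans ?_
  have hb : ∀ w : ℂ, w.im ≤ 0 → Ig ν σ z w ≤ (z.im^2)⁻¹ := by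
    intro w hw
    refine (Ig_le hz hw).trans ?_
    have h1 : z.im ≤ z.im - σ^2 * w.im := by nlinarith [sq_nonneg σ]
    have h2 : z.im^2 ≤ (z.im - σ^2 * w.im)^2 := by nlinarith
    exact inv_anti₀ (by positivity) h2
  have hs : Real.sqrt (Ig ν σ z g * Ig ν σ z h) ≤ (z.im^2)⁻¹ := by
    rw [show ((z.im^2)⁻¹ : ℝ) = Real.sqrt ((z.im^2)⁻¹ * (z.im^2)⁻¹) by
      rw [Real.sqrt_mul_self (by positivity)]]
    exact Real.sqrt_le_sqrt (mul_le_mul (hb g hg) (hb h hh) hIh.le (by positivity))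
  calc σ^2 * ‖g - h‖ * Real.sqrt (Ig ν σ z g * Ig ν σ z h)
      ≤ σ^2 * ‖g - h‖ * (z.im^2)⁻¹ := by
        apply mul_le_mul_of_nonneg_left hs (by positivity)
    _ = σ^2 / z.im^2 * ‖g - h‖ := by ring

end Stmt13

set_option maxHeartbeats 1000000 in
open Stmt13 in
/-- For each `z` in the upper half-plane there is a unique `g` with `Im g < 0`
satisfying the fixed point equation of the deformed semicircular law. -/
theorem stmt_13 (ν : Measure ℝ) [IsProbabilityMeasure ν]
    (K : Set ℝ) (hK : IsCompact K) (hKfull : ν Kᶜ = 0)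
    (σ : ℝ) (hσ : 0 < σ) (z : ℂ) (hz : 0 < z.im) :
    ∃! g : ℂ, g.im < 0 ∧ g = ∫ t, (z - σ^2 * g - (t:ℂ))⁻¹ ∂ν := by
  classical
  set y := z.im with hy
  obtain ⟨M, hMb⟩ := hK.isBounded.exists_norm_le
  set M' : ℝ := max M 0 with hM'def
  have hM0 : (0:ℝ) ≤ M' := le_max_right _ _
  have hM : ∀ t ∈ K, |t| ≤ M' := fun t ht => le_trans (hMb t ht) (le_max_left _ _)
  have hae : ∀ᵐ t ∂ν, t ∈ K := by
    rw [MeasureTheory.ae_iff]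
    exact hKfull
  have hzn : 0 < ‖z‖ := by
    have : z.im ≤ ‖z‖ := le_trans (le_abs_self _) (Complex.abs_im_le_norm z)
    linarith
  -- the statement integral is `F`
  have hFeq : ∀ g : ℂ, (∫ t, (z - σ^2 * g - (t:ℂ))⁻¹ ∂ν) = F ν σ z g := fun g => rfl
  -- positivity of Ig
  have hIgpos : ∀ g : ℂ, g.im ≤ 0 → 0 < Ig ν σ z g := by
    intro g hg
    have h1 : (0:ℝ) < ((‖z‖ + σ^2 * ‖g‖ + M')^2)⁻¹ := by positivity
    exact lt_of_lt_of_le h1 (Ig_ge hM0 hM hae hz hg)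
  -- F preserves the open lower half plane
  have hFim : ∀ g : ℂ, g.im ≤ 0 → (F ν σ z g).im < 0 := by
    intro g hg
    rw [im_F hz hg]
    have h1 : 0 < z.im - σ^2 * g.im := by nlinarith [sq_nonneg σ]
    have := hIgpos g hg
    nlinarith
  -- norm bound
  have hFnorm : ∀ g : ℂ, g.im ≤ 0 → ‖F ν σ z g‖ ≤ 1 / y := by
    intro g hg
    refine (norm_F_le hz hg).trans ?_
    rw [one_div]
    apply inv_anti₀ hz
    nlinarith [sq_nonneg σ]
  set r : ℝ := σ^2 / (σ^2 + y^2) with hrdef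
  have hr0 : 0 < r := by positivity
  have hr1 : r < 1 := by
    rw [hrdef, div_lt_one (by positivity)]
    nlinarith
  set c : ℝ := y * ((‖z‖ + σ^2 * (1/y) + M')^2)⁻¹ with hcdef
  have hc : 0 < c := by positivity
  -- uniqueness of solutions
  have key : ∀ g h : ℂ, g.im < 0 → g = F ν σ z g → h.im < 0 → h = F ν σ z h → g = h := by
    have hIb : ∀ w : ℂ, w.im < 0 → w = F ν σ z w → Ig ν σ z w * (σ^2 + y^2) ≤ 1 := by
      intro w hw hwe
      have hwa : -w.im ≤ 1/y := by
        have h1 : -w.im ≤ |w.im| := neg_le_abs _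
        have h2 : |w.im| ≤ ‖w‖ := by
          exact Complex.abs_im_le_norm w
        have h3 : ‖w‖ ≤ 1/y := by rw [hwe]; exact hFnorm w hw.le
        linarith
      have hIg := hIgpos w hw.le
      have hIm : w.im = -((y - σ^2 * w.im) * Ig ν σ z w) := by
        conv_lhs => rw [hwe]
        exact im_F hz hw.le
      have hy1 : (-w.im) * y ≤ 1 := by
        rw [← le_div_iff₀ hz]; exact hwa
      have ha : 0 < -w.im := neg_pos.2 hw
      have h5 : (-w.im) * y^2 ≤ y := by nlinarith
      have h6 : Ig ν σ z w * ((-w.im) * y^2) ≤ Ig ν σ z w * y :=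
        mul_le_mul_of_nonneg_left h5 hIg.le
      have h7 : -w.im = (y - σ^2 * w.im) * Ig ν σ z w := by linarith [hIm]
      have h8 : Ig ν σ z w * (σ^2 + y^2) * (-w.im) ≤ -w.im := by nlinarith [h6, h7]
      nlinarith [h8, ha]
    intro g h hg hge hh hhe
    have hIg := hIgpos g hg.le
    have hIh := hIgpos h hh.le
    have hd := F_sub_le hz hg.le hh.le hIg hIh
    rw [← hge, ← hhe] at hd
    have hs : Real.sqrt (Ig ν σ z g * Ig ν σ z h) ≤ (σ^2 + y^2)⁻¹ := by
      rw [show ((σ^2 + y^2)⁻¹ : ℝ) = Real.sqrt ((σ^2 + y^2)⁻¹ * (σ^2 + y^2)⁻¹) by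
        rw [Real.sqrt_mul_self (by positivity)]]
      apply Real.sqrt_le_sqrt
      have hIinv : ∀ w : ℂ, w.im < 0 → w = F ν σ z w → Ig ν σ z w ≤ (σ^2 + y^2)⁻¹ := by
        intro w hw hwe
        rw [show ((σ^2 + y^2)⁻¹ : ℝ) = 1/(σ^2 + y^2) from (one_div _).symm,
          le_div_iff₀ (by positivity : (0:ℝ) < σ^2 + y^2)]
        exact hIb w hw hwe
      have h1 := hIinv g hg hge
      have h2 := hIinv h hh hhe
      exact mul_le_mul h1 h2 hIh.le (by positivity)
    have hfin : ‖g - h‖ ≤ r * ‖g - h‖ := by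
      refine hd.trans ?_
      calc σ^2 * ‖g - h‖ * Real.sqrt (Ig ν σ z g * Ig ν σ z h)
          ≤ σ^2 * ‖g - h‖ * (σ^2 + y^2)⁻¹ :=
            mul_le_mul_of_nonneg_left hs (by positivity)
        _ = r * ‖g - h‖ := by rw [hrdef]; ring
    have : ‖g - h‖ ≤ 0 := by nlinarith [norm_nonneg (g - h)]
    have : g - h = 0 := by
      have := le_antisymm this (norm_nonneg _)
      exact norm_eq_zero.1 this
    linear_combination this
  -- main step invariant
  have hstep : ∀ g : ℂ, g.im < 0 → ‖g‖ ≤ 1/y → ((F ν σ z g).im ≤ -c ∧ ‖F ν σ z g‖ ≤ 1/y) := by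
    intro g hg hn
    refine ⟨?_, hFnorm g hg.le⟩
    rw [im_F hz hg.le]
    have h1 : ((‖z‖ + σ^2 * (1/y) + M')^2)⁻¹ ≤ ((‖z‖ + σ^2 * ‖g‖ + M')^2)⁻¹ := by
      apply inv_anti₀ (by positivity)
      have : ‖z‖ + σ^2 * ‖g‖ + M' ≤ ‖z‖ + σ^2 * (1/y) + M' := by
        nlinarith [sq_nonneg σ]
      exact pow_le_pow_left₀ (by positivity) this 2
    have h2 : ((‖z‖ + σ^2 * ‖g‖ + M')^2)⁻¹ ≤ Ig ν σ z g := Ig_ge hM0 hM hae hz hg.le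
    have h3 : y ≤ y - σ^2 * g.im := by nlinarith [sq_nonneg σ]
    have h4 : (0:ℝ) < ((‖z‖ + σ^2 * (1/y) + M')^2)⁻¹ := by positivity
    rw [hcdef]
    nlinarith [hIgpos g hg.le]
  -- existence
  have hex : ∃ g : ℂ, g.im < 0 ∧ g = F ν σ z g := by
    set Φ : ℂ → ℂ := F ν σ z with hΦ
    set seq : ℕ → ℂ := fun n => Φ^[n] (Φ (Φ (-Complex.I))) with hseqdef
    have hseq0 : seq 0 = Φ (Φ (-Complex.I)) := rfl
    have hseqS : ∀ n, seq (n+1) = Φ (seq n) := fun n => Function.iterate_succ_apply' Φ n _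
    have hIim : (-Complex.I).im ≤ 0 := by simp
    have hP : ∀ n, (seq n).im ≤ -c ∧ ‖seq n‖ ≤ 1/y := by
      intro n
      induction n with
      | zero =>
        rw [hseq0]
        exact hstep _ (hFim _ hIim) (hFnorm _ hIim)
      | succ n ih =>
        rw [hseqS]
        exact hstep _ (lt_of_le_of_lt ih.1 (by linarith)) ih.2
    have hPim : ∀ n, (seq n).im ≤ 0 := fun n => le_trans (hP n).1 (by linarith)
    set a : ℕ → ℝ := fun n => -(seq n).im with hadef
    have hapos : ∀ n, c ≤ a n := fun n => by
      have := (hP n).1; simp only [hadef]; linarith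
    have ha0 : ∀ n, 0 < a n := fun n => lt_of_lt_of_le hc (hapos n)
    have hale : ∀ n, a n ≤ 1/y := by
      intro n
      have h1 : -(seq n).im ≤ |(seq n).im| := neg_le_abs _
      have h2 : |(seq n).im| ≤ ‖seq n‖ := by
        exact Complex.abs_im_le_norm _
      exact le_trans (le_trans h1 h2) (hP n).2
    have hrec : ∀ n, a (n+1) = (y + σ^2 * a n) * Ig ν σ z (seq n) := by
      intro n
      have h1 : (seq (n+1)).im = -((y - σ^2 * (seq n).im) * Ig ν σ z (seq n)) := by
        rw [hseqS]; exact im_F hz (hPim n)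
      simp only [hadef]
      rw [h1]; ring
    have hIgB : ∀ n, Ig ν σ z (seq n) * ((σ^2 + y^2) * a n) ≤ a (n+1) := by
      intro n
      have hI := hIgpos (seq n) (hPim n)
      have h5 : a n * y^2 ≤ y := by
        have h5' : a n * y ≤ 1 := (le_div_iff₀ hz).mp (hale n)
        nlinarith
      have h6 : Ig ν σ z (seq n) * (a n * y^2) ≤ Ig ν σ z (seq n) * y :=
        mul_le_mul_of_nonneg_left h5 hI.le
      have h7 := hrec n
      nlinarith [h6, h7]
    set d : ℕ → ℝ := fun n => ‖seq (n+1) - seq n‖ with hddef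
    have hd0 : ∀ n, 0 ≤ d n := fun n => norm_nonneg _
    -- one-step contraction (squared form)
    have hsq : ∀ n, (d (n+1))^2 * ((σ^2 + y^2)^2 * (a n * a (n+1)))
        ≤ σ^4 * (d n)^2 * (a (n+1) * a (n+2)) := by
      intro n
      have hI1 := hIgpos (seq (n+1)) (hPim (n+1))
      have hI0 := hIgpos (seq n) (hPim n)
      have hFs : d (n+1) ≤ σ^2 * d n * Real.sqrt (Ig ν σ z (seq (n+1)) * Ig ν σ z (seq n)) := by
        have h := F_sub_le hz (hPim (n+1)) (hPim n) hI1 hI0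
        rw [← hΦ] at h
        rw [← hseqS (n+1), ← hseqS n] at h
        exact h
      have hFs2 : (d (n+1))^2 ≤ σ^4 * (d n)^2 * (Ig ν σ z (seq (n+1)) * Ig ν σ z (seq n)) := by
        have h1 : (d (n+1))^2
            ≤ (σ^2 * d n * Real.sqrt (Ig ν σ z (seq (n+1)) * Ig ν σ z (seq n)))^2 :=
          pow_le_pow_left₀ (hd0 _) hFs 2
        refine h1.trans_eq ?_
        rw [mul_pow, mul_pow, Real.sq_sqrt (mul_nonneg hI1.le hI0.le)]
        ring
      have p1 : (Ig ν σ z (seq n) * ((σ^2 + y^2) * a n))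
            * (Ig ν σ z (seq (n+1)) * ((σ^2 + y^2) * a (n+1)))
          ≤ a (n+1) * a (n+2) :=
        mul_le_mul (hIgB n) (hIgB (n+1))
          (mul_nonneg hI1.le (mul_nonneg (by positivity) (ha0 _).le)) (ha0 _).le
      have p2 : (d (n+1))^2 * ((σ^2 + y^2)^2 * (a n * a (n+1)))
          ≤ σ^4 * (d n)^2 * ((Ig ν σ z (seq (n+1)) * Ig ν σ z (seq n)))
            * ((σ^2 + y^2)^2 * (a n * a (n+1))) :=
        mul_le_mul_of_nonneg_right hFs2
          (mul_nonneg (by positivity) (mul_nonneg (ha0 _).le (ha0 _).le))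
      refine p2.trans ?_
      have p3 : σ^4 * (d n)^2 * (Ig ν σ z (seq (n+1)) * Ig ν σ z (seq n))
            * ((σ^2 + y^2)^2 * (a n * a (n+1)))
          = σ^4 * (d n)^2 * ((Ig ν σ z (seq n) * ((σ^2 + y^2) * a n))
            * (Ig ν σ z (seq (n+1)) * ((σ^2 + y^2) * a (n+1)))) := by ring
      rw [p3]
      exact mul_le_mul_of_nonneg_left p1 (by positivity)
    -- geometric decay of W n = d n ^ 2 / (a n * a (n+1))
    set W : ℕ → ℝ := fun n => (d n)^2 / (a n * a (n+1)) with hWdef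
    have hW0 : ∀ n, 0 ≤ W n := fun n =>
      div_nonneg (sq_nonneg _) (mul_nonneg (ha0 n).le (ha0 (n+1)).le)
    have hWstep : ∀ n, W (n+1) ≤ r^2 * W n := by
      intro n
      have hq := hsq n
      simp only [hWdef]
      rw [hrdef, div_pow, div_mul_div_comm,
        div_le_div_iff₀ (mul_pos (ha0 (n+1)) (ha0 (n+2)))
          (mul_pos (by positivity) (mul_pos (ha0 n) (ha0 (n+1))))]
      nlinarith [hq]
    have hWgeo : ∀ n, W n ≤ (r^2)^n * W 0 := by
      intro n
      induction n with
      | zero => simp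
      | succ n ih =>
        calc W (n+1) ≤ r^2 * W n := hWstep n
          _ ≤ r^2 * ((r^2)^n * W 0) := mul_le_mul_of_nonneg_left ih (by positivity)
          _ = (r^2)^(n+1) * W 0 := by ring
    set C : ℝ := Real.sqrt (W 0) * (1/y) with hCdef
    have hdgeo : ∀ n, d n ≤ C * r^n := by
      intro n
      have h1 : (d n)^2 = W n * (a n * a (n+1)) := by
        have hne : a n * a (n+1) ≠ 0 := (mul_pos (ha0 n) (ha0 (n+1))).ne'
        simp only [hWdef]
        rw [div_mul_cancel₀ _ hne]
      have h2 : (d n)^2 ≤ ((r^2)^n * W 0) * ((1/y) * (1/y)) := by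
        rw [h1]
        exact mul_le_mul (hWgeo n)
          (mul_le_mul (hale n) (hale (n+1)) (ha0 _).le (by positivity))
          (mul_nonneg (ha0 _).le (ha0 _).le) (mul_nonneg (by positivity) (hW0 0))
      have hrr : (r^2)^n = (r^n)^2 := by ring
      have h4 : Real.sqrt (W 0) ^ 2 = W 0 := Real.sq_sqrt (hW0 0)
      have h5 : 0 ≤ Real.sqrt (W 0) * (1/y) * r^n := by positivity
      rw [hrr, ← h4] at h2
      rw [hCdef]
      nlinarith [h2, hd0 n, h5]
    -- Cauchy sequence
    have hcs : CauchySeq seq := by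
      apply cauchySeq_of_le_geometric r C hr1
      intro n
      rw [dist_eq_norm, norm_sub_rev]
      exact hdgeo n
    obtain ⟨g, hgl⟩ := cauchySeq_tendsto_of_complete hcs
    have hgim : g.im ≤ -c := by
      have h1 : Filter.Tendsto (fun n => (seq n).im) Filter.atTop (nhds g.im) :=
        (Complex.continuous_im.tendsto g).comp hgl
      exact le_of_tendsto h1 (Filter.Eventually.of_forall fun n => (hP n).1)
    have hgim0 : g.im ≤ 0 := le_trans hgim (by linarith)
    have h1 : Filter.Tendsto (fun n => seq (n+1)) Filter.atTop (nhds g) :=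
      hgl.comp (Filter.tendsto_add_atTop_nat 1)
    have h2 : Filter.Tendsto (fun n => Φ (seq n)) Filter.atTop (nhds (Φ g)) := by
      rw [tendsto_iff_dist_tendsto_zero]
      have hb : ∀ n, dist (Φ (seq n)) (Φ g) ≤ σ^2/y^2 * dist (seq n) g := by
        intro n
        rw [dist_eq_norm, dist_eq_norm]
        have h := F_lip hz (hPim n) hgim0 (hIgpos _ (hPim n)) (hIgpos _ hgim0)
        rw [← hΦ] at h
        exact h
      have hg0 : Filter.Tendsto (fun n => σ^2/y^2 * dist (seq n) g) Filter.atTop (nhds 0) := by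
        have := (tendsto_iff_dist_tendsto_zero.1 hgl).const_mul (σ^2/y^2)
        simpa using this
      exact squeeze_zero (fun n => dist_nonneg) hb hg0
    have h3 : (fun n => Φ (seq n)) = fun n => seq (n+1) := by
      funext n; rw [hseqS]
    rw [h3] at h2
    refine ⟨g, lt_of_le_of_lt hgim (by linarith), ?_⟩
    exact tendsto_nhds_unique h1 h2
  obtain ⟨g, hgim, hgeq⟩ := hex
  refine ⟨g, ⟨hgim, by rw [hFeq]; exact hgeq⟩, ?_⟩
  rintro w ⟨hwim, hweq⟩
  exact key w g hwim (by rw [← hFeq]; exact hweq) hgim hgeq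
end

section
/- Let ν be a compactly supported probability measure on ℝ whose support is a finite union of disjoint closed bounded intervals, σ > 0, and let 𝒪₁ = {u ∈ ℝ ∖ supp(ν) : 1 − σ² ∫ (u−x)^{-2} dν(x) > 0}. Then ℝ ∖ 𝒪₁ is a finite union of disjoint closed bounded intervals [u_1,v_1], …, [u_p,v_p], each of which has nonempty intersection with supp(ν), and supp(ν) ⊆ ∪_l [u_l, v_l]. -/
open MeasureTheory Set


/-- convexity of u ↦ ((u-x)^2)⁻¹ to the right of x -/
lemma aux_convexOn_right (x : ℝ) : ConvexOn ℝ (Set.Ioi x) (fun u => ((u - x)^2)⁻¹) := by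
  have h := convexOn_zpow (𝕜 := ℝ) (-2)
  refine ⟨convex_Ioi x, ?_⟩
  intro u hu v hv s t hs ht hst
  have hu' : u - x ∈ Set.Ioi (0:ℝ) := by simp [Set.mem_Ioi] at hu ⊢; linarith
  have hv' : v - x ∈ Set.Ioi (0:ℝ) := by simp [Set.mem_Ioi] at hv ⊢; linarith
  have := h.2 hu' hv' hs ht hst
  have hrw : ∀ y : ℝ, y ^ (-2 : ℤ) = ((y)^2)⁻¹ := by
    intro y; rw [zpow_neg]; norm_cast
  simp only [hrw] at this
  have harg : s • (u - x) + t • (v - x) = s • u + t • v - x := by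
    simp only [smul_eq_mul]; linear_combination (-x) * hst
  rw [harg] at this
  simpa using this

lemma aux_convexOn_left (x : ℝ) : ConvexOn ℝ (Set.Iio x) (fun u => ((u - x)^2)⁻¹) := by
  have h := aux_convexOn_right (-x)
  refine ⟨convex_Iio x, ?_⟩
  intro u hu v hv s t hs ht hst
  have hu' : -u ∈ Set.Ioi (-x) := by simp [Set.mem_Ioi] at hu ⊢; linarith
  have hv' : -v ∈ Set.Ioi (-x) := by simp [Set.mem_Iio] at hv ⊢; linarith
  have := h.2 hu' hv' hs ht hst
  simp only [smul_eq_mul] at this ⊢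
  have e1 : (s * -u + t * -v - -x)^2 = (s * u + t * v - x)^2 := by ring
  have e2 : (-u - -x)^2 = (u - x)^2 := by ring
  have e3 : (-v - -x)^2 = (v - x)^2 := by ring
  rw [e1, e2, e3] at this
  exact this

/-- a convex set avoiding x lies on one side -/
lemma aux_side {I : Set ℝ} (hI : Convex ℝ I) {x : ℝ} (hx : x ∉ I) :
    I ⊆ Set.Iio x ∨ I ⊆ Set.Ioi x := by
  by_contra hc
  push_neg at hc
  obtain ⟨h1, h2⟩ := hc
  rw [Set.not_subset] at h1 h2
  obtain ⟨u, hu, hu'⟩ := h1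
  obtain ⟨v, hv, hv'⟩ := h2
  simp [Set.mem_Iio, Set.mem_Ioi, not_lt] at hu' hv'
  have : x ∈ I := by
    have := hI.ordConnected.out hv hu
    exact this ⟨hv', hu'⟩
  exact hx this

lemma aux_convexOn_off {I : Set ℝ} (hI : Convex ℝ I) {x : ℝ} (hx : x ∉ I) :
    ConvexOn ℝ I (fun u => ((u - x)^2)⁻¹) := by
  rcases aux_side hI hx with h | h
  · exact (aux_convexOn_left x).subset h hI
  · exact (aux_convexOn_right x).subset h hI


/-- The support of a measure on `ℝ`: points all of whose neighbourhoods have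
positive measure. -/
def msupport (ν : Measure ℝ) : Set ℝ := {x : ℝ | ∀ U ∈ nhds x, 0 < ν U}

lemma aux_ae_msupport (ν : Measure ℝ) : ∀ᵐ x ∂ν, x ∈ msupport ν := by
  rw [ae_iff]
  apply measure_null_of_locally_null
  intro x hx
  simp only [Set.mem_setOf_eq, msupport, not_forall] at hx
  obtain ⟨U, hU, hU0⟩ := hx
  refine ⟨U, mem_nhdsWithin_of_mem_nhds hU, ?_⟩
  simpa using hU0

lemma aux_integrable (ν : Measure ℝ) [IsFiniteMeasure ν] {K : Set ℝ}
    (hae : ∀ᵐ x ∂ν, x ∈ K) {w ε : ℝ} (hε : 0 < ε) (hd : ∀ x ∈ K, ε ≤ |w - x|) :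
    Integrable (fun x => ((w - x)^2)⁻¹) ν := by
  apply (integrable_const ((ε^2)⁻¹)).mono'
  · exact (((measurable_const.sub measurable_id).pow_const 2).inv).aestronglyMeasurable
  · filter_upwards [hae] with x hx
    rw [Real.norm_eq_abs, abs_of_nonneg (by positivity)]
    have h1 := hd x hx
    have h2 : ε^2 ≤ (w - x)^2 := by nlinarith [abs_nonneg (w - x), sq_abs (w - x)]
    exact inv_anti₀ (by positivity) h2

lemma aux_integral_le (ν : Measure ℝ) [IsProbabilityMeasure ν] {K : Set ℝ}
    (hae : ∀ᵐ x ∂ν, x ∈ K) {w ε : ℝ} (hε : 0 < ε) (hd : ∀ x ∈ K, ε ≤ |w - x|) :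
    ∫ x, ((w - x)^2)⁻¹ ∂ν ≤ (ε^2)⁻¹ := by
  have hint := aux_integrable ν hae hε hd
  have hb : ∀ᵐ x ∂ν, ((w - x)^2)⁻¹ ≤ (ε^2)⁻¹ := by
    filter_upwards [hae] with x hx
    have h1 := hd x hx
    have h2 : ε^2 ≤ (w - x)^2 := by nlinarith [abs_nonneg (w - x), sq_abs (w - x)]
    exact inv_anti₀ (by positivity) h2
  calc ∫ x, ((w - x)^2)⁻¹ ∂ν ≤ ∫ _, (ε^2)⁻¹ ∂ν :=
        integral_mono_ae hint (integrable_const _) hb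
    _ = (ε^2)⁻¹ := by simp

lemma aux_h_convexOn (ν : Measure ℝ) {K I : Set ℝ}
    (hae : ∀ᵐ x ∂ν, x ∈ K) (hI : Convex ℝ I)
    (hint : ∀ w ∈ I, Integrable (fun x => ((w - x)^2)⁻¹) ν)
    (hdisj : ∀ x ∈ K, x ∉ I) :
    ConvexOn ℝ I (fun w => ∫ x, ((w - x)^2)⁻¹ ∂ν) := by
  refine ⟨hI, ?_⟩
  intro u hu v hv s t hs ht hst
  have hm : s • u + t • v ∈ I := hI hu hv hs ht hst
  have key : ∀ᵐ x ∂ν, ((s • u + t • v - x)^2)⁻¹ ≤ s * ((u - x)^2)⁻¹ + t * ((v - x)^2)⁻¹ := by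
    filter_upwards [hae] with x hx
    have := (aux_convexOn_off hI (hdisj x hx)).2 hu hv hs ht hst
    simpa [smul_eq_mul] using this
  calc ∫ x, ((s • u + t • v - x)^2)⁻¹ ∂ν
      ≤ ∫ x, (s * ((u - x)^2)⁻¹ + t * ((v - x)^2)⁻¹) ∂ν :=
        integral_mono_ae (hint _ hm) (((hint u hu).smul s).add ((hint v hv).smul t)) key
    _ = s * ∫ x, ((u - x)^2)⁻¹ ∂ν + t * ∫ x, ((v - x)^2)⁻¹ ∂ν := by
        rw [integral_add ((hint u hu).const_mul s) ((hint v hv).const_mul t),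
          MeasureTheory.integral_const_mul, MeasureTheory.integral_const_mul]


lemma aux_not_mem_of_sSup {s : Set ℝ} (ho : IsOpen s) (hb : BddAbove s) : sSup s ∉ s := by
  intro hmem
  obtain ⟨ε, hε, hball⟩ := Metric.isOpen_iff.1 ho _ hmem
  have : sSup s + ε/2 ∈ s := hball (by simp [Real.dist_eq, abs_of_nonneg hε.le]; linarith)
  have := le_csSup hb this
  linarith

lemma aux_not_mem_of_sInf {s : Set ℝ} (ho : IsOpen s) (hb : BddBelow s) : sInf s ∉ s := by
  intro hmem
  obtain ⟨ε, hε, hball⟩ := Metric.isOpen_iff.1 ho _ hmem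
  have : sInf s - ε/2 ∈ s := hball (by
    simp only [Metric.mem_ball, Real.dist_eq]
    rw [abs_of_nonpos (by linarith)]; linarith)
  have := csInf_le hb this
  linarith

lemma aux_ray_left {s : Set ℝ} (ho : IsOpen s) (hc : Convex ℝ s) {a c : ℝ}
    (hsub : s ⊆ Iio a) (hray : Iio c ⊆ s) : s = Iio (sSup s) ∧ sSup s ≤ a := by
  have hb : BddAbove s := ⟨a, fun x hx => le_of_lt (hsub hx)⟩
  have hne : s.Nonempty := ⟨c - 1, hray (by simp only [mem_Iio]; linarith)⟩
  constructor
  · ext x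
    simp only [mem_Iio]
    constructor
    · intro hx
      exact lt_of_le_of_ne (le_csSup hb hx) (fun h => aux_not_mem_of_sSup ho hb (h ▸ hx))
    · intro hx
      obtain ⟨t, ht, hxt⟩ := exists_lt_of_lt_csSup hne hx
      set z := min (c - 1) x - 1 with hz
      have hzs : z ∈ s := hray (by simp only [mem_Iio, hz]; linarith [min_le_left (c-1) x])
      have hzx : z ≤ x := by simp only [hz]; linarith [min_le_right (c-1) x]
      exact hc.ordConnected.out hzs ht ⟨hzx, hxt.le⟩
  · exact csSup_le hne (fun x hx => (hsub hx).le)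

lemma aux_ray_right {s : Set ℝ} (ho : IsOpen s) (hc : Convex ℝ s) {a c : ℝ}
    (hsub : s ⊆ Ioi a) (hray : Ioi c ⊆ s) : s = Ioi (sInf s) ∧ a ≤ sInf s := by
  have hb : BddBelow s := ⟨a, fun x hx => le_of_lt (hsub hx)⟩
  have hne : s.Nonempty := ⟨c + 1, hray (by simp only [mem_Ioi]; linarith)⟩
  constructor
  · ext x
    simp only [mem_Ioi]
    constructor
    · intro hx
      exact lt_of_le_of_ne (csInf_le hb hx) (fun h => aux_not_mem_of_sInf ho hb (h.symm ▸ hx))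
    · intro hx
      obtain ⟨t, ht, hxt⟩ := exists_lt_of_csInf_lt hne hx
      set z := max (c + 1) x + 1 with hz
      have hzs : z ∈ s := hray (by simp only [mem_Ioi, hz]; linarith [le_max_left (c+1) x])
      have hzx : x ≤ z := by simp only [hz]; linarith [le_max_right (c+1) x]
      exact hc.ordConnected.out ht hzs ⟨hxt.le, hzx⟩
  · exact le_csInf hne (fun x hx => (hsub hx).le)

lemma aux_Ioo {s : Set ℝ} (ho : IsOpen s) (hc : Convex ℝ s) {p q : ℝ}
    (hsub : s ⊆ Ioo p q) (hne : s.Nonempty) :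
    s = Ioo (sInf s) (sSup s) ∧ p ≤ sInf s ∧ sSup s ≤ q := by
  have hbA : BddAbove s := ⟨q, fun x hx => (hsub hx).2.le⟩
  have hbB : BddBelow s := ⟨p, fun x hx => (hsub hx).1.le⟩
  refine ⟨?_, le_csInf hne (fun x hx => (hsub hx).1.le),
    csSup_le hne (fun x hx => (hsub hx).2.le)⟩
  ext x
  simp only [mem_Ioo]
  constructor
  · intro hx
    exact ⟨lt_of_le_of_ne (csInf_le hbB hx) (fun h => aux_not_mem_of_sInf ho hbB (h ▸ hx)),
      lt_of_le_of_ne (le_csSup hbA hx) (fun h => aux_not_mem_of_sSup ho hbA (h ▸ hx))⟩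
  · rintro ⟨h1, h2⟩
    obtain ⟨z, hz, hzx⟩ := exists_lt_of_csInf_lt hne h1
    obtain ⟨t, ht, hxt⟩ := exists_lt_of_lt_csSup hne h2
    exact hc.ordConnected.out hz ht ⟨hzx.le, hxt.le⟩


lemma aux_merge : ∀ (m : ℕ), 0 < m → ∀ (u v : ℕ → ℝ) (K : Set ℝ),
    (∀ i < m, u i ≤ v i) →
    (∀ i, i+1 < m → v i ≤ u (i+1)) →
    (∀ i < m, (Set.Icc (u i) (v i) ∩ K).Nonempty) →
    ∃ p, 0 < p ∧ ∃ u' v' : ℕ → ℝ,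
      (∀ l < p, u' l ≤ v' l) ∧
      (∀ l, l+1 < p → v' l < u' (l+1)) ∧
      ((⋃ l, ⋃ (_ : l < p), Set.Icc (u' l) (v' l)) = ⋃ i, ⋃ (_ : i < m), Set.Icc (u i) (v i)) ∧
      (∀ l < p, (Set.Icc (u' l) (v' l) ∩ K).Nonempty) ∧
      v' (p-1) = v (m-1) := by
  intro m
  induction m with
  | zero => intro h; exact absurd h (lt_irrefl 0)
  | succ n IH =>
    intro _ u v K hle hj hK
    rcases Nat.eq_zero_or_pos n with rfl | hn
    · exact ⟨1, one_pos, u, v, fun l hl => hle l hl, fun l hl => absurd hl (by omega),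
        rfl, fun l hl => hK l hl, rfl⟩
    obtain ⟨k, rfl⟩ : ∃ k, n = k + 1 := ⟨n - 1, by omega⟩
    have hvn : v k ≤ u (k+1) := hj k (by omega)
    by_cases hlt : v k < u (k+1)
    · obtain ⟨p, hp, u', v', h1, h2, h3, h4, h5⟩ :=
        IH (by omega) u v K (fun i hi => hle i (by omega)) (fun i hi => hj i (by omega))
          (fun i hi => hK i (by omega))
      have h5' : v' (p-1) = v k := h5
      refine ⟨p+1, by omega, (fun l => if l < p then u' l else u (k+1)),
          (fun l => if l < p then v' l else v (k+1)), ?_, ?_, ?_, ?_, ?_⟩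
      · intro l hl
        by_cases h : l < p
        · simp only [if_pos h]; exact h1 l h
        · simp only [if_neg h]; exact hle (k+1) (by omega)
      · intro l hl
        by_cases h : l + 1 < p
        · have hlp : l < p := by omega
          simp only [if_pos h, if_pos hlp]; exact h2 l h
        · have hlp : l < p := by omega
          simp only [if_pos hlp, if_neg h]
          have : l = p - 1 := by omega
          rw [this, h5']
          exact hlt
      · rw [biUnion_lt_succ, biUnion_lt_succ]
        have e1 : (⋃ l, ⋃ (_ : l < p), Set.Icc (if l < p then u' l else u (k+1)) (if l < p then v' l else v (k+1)))
            = ⋃ l, ⋃ (_ : l < p), Set.Icc (u' l) (v' l) := by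
          apply iUnion_congr; intro l; apply iUnion_congr; intro hl
          simp only [if_pos hl]
        rw [e1, h3]
        simp only [if_neg (lt_irrefl p), if_false]
      · intro l hl
        by_cases h : l < p
        · simp only [if_pos h]; exact h4 l h
        · simp only [if_neg h]; exact hK (k+1) (by omega)
      · simp only [Nat.add_sub_cancel, if_neg (lt_irrefl p)]
    · have veq : u (k+1) = v k := le_antisymm (not_lt.1 hlt) hvn
      set v2 : ℕ → ℝ := fun i => if i = k then v (k+1) else v i with hv2
      have hun : u (k+1) ≤ v (k+1) := hle (k+1) (by omega)
      have hvk1 : v k ≤ v (k+1) := veq ▸ hun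
      obtain ⟨p, hp, u', v', h1, h2, h3, h4, h5⟩ :=
        IH (by omega) u v2 K
          (fun i hi => by
            by_cases h : i = k
            · subst h; simp only [hv2, if_pos rfl]
              exact le_trans (hle i (by omega)) hvk1
            · simp only [hv2, if_neg h]; exact hle i (by omega))
          (fun i hi => by
            have h : i ≠ k := by omega
            simp only [hv2, if_neg h]; exact hj i (by omega))
          (fun i hi => by
            by_cases h : i = k
            · subst h
              apply Set.Nonempty.mono _ (hK i (by omega))
              apply Set.inter_subset_inter_left
              apply Set.Icc_subset_Icc le_rfl
              simp only [hv2, if_pos rfl]; exact hvk1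
            · apply Set.Nonempty.mono _ (hK i (by omega))
              apply Set.inter_subset_inter_left
              simp only [hv2, if_neg h]
              exact subset_rfl)
      refine ⟨p, hp, u', v', h1, h2, ?_, h4, ?_⟩
      · rw [h3]
        rw [biUnion_lt_succ (fun i => Set.Icc (u i) (v2 i)) k,
          biUnion_lt_succ, biUnion_lt_succ]
        have e1 : (⋃ l, ⋃ (_ : l < k), Set.Icc (u l) (v2 l))
            = ⋃ l, ⋃ (_ : l < k), Set.Icc (u l) (v l) := by
          apply iUnion_congr; intro l; apply iUnion_congr; intro hl
          have : l ≠ k := by omega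
          simp only [hv2, if_neg this]
        rw [e1, union_assoc]
        congr 1
        have e2 : v2 k = v (k+1) := by simp only [hv2, if_pos rfl]
        rw [e2, ← veq]
        exact (Icc_union_Icc_eq_Icc (veq ▸ hle k (by omega) : u k ≤ u (k+1)) hun).symm
      · have e5 : v' (p-1) = v2 k := h5
        rw [e5]
        simp only [hv2, if_pos rfl, Nat.add_sub_cancel]


lemma aux_trich : ∀ (m : ℕ), 0 < m → ∀ (A B : ℕ → ℝ), (∀ i < m, A i ≤ B i) →
    (∀ i, i+1 < m → B i < A (i+1)) → ∀ (x : ℝ), (∀ i < m, x ∉ Icc (A i) (B i)) →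
    x < A 0 ∨ B (m-1) < x ∨ ∃ i, i+1 < m ∧ B i < x ∧ x < A (i+1) := by
  intro m
  induction m with
  | zero => intro h; exact absurd h (lt_irrefl 0)
  | succ n IH =>
    intro _ A B hAB hBA x hx
    rcases Nat.eq_zero_or_pos n with rfl | hn
    · have := hx 0 (by omega)
      simp only [mem_Icc, not_and, not_le] at this
      by_cases h : A 0 ≤ x
      · exact Or.inr (Or.inl (this h))
      · exact Or.inl (not_le.1 h)
    · rcases IH hn A B (fun i hi => hAB i (by omega)) (fun i hi => hBA i (by omega))
        x (fun i hi => hx i (by omega)) with h | h | ⟨i, hi, h1, h2⟩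
      · exact Or.inl h
      · by_cases hcmp : x < A n
        · exact Or.inr (Or.inr ⟨n-1, by omega, by
            obtain ⟨k, rfl⟩ : ∃ k, n = k + 1 := ⟨n-1, by omega⟩
            exact ⟨h, by simpa using hcmp⟩⟩)
        · have := hx n (by omega)
          simp only [mem_Icc, not_and, not_le] at this
          have : B n < x := this (not_lt.1 hcmp)
          exact Or.inr (Or.inl (by simpa using this))
      · exact Or.inr (Or.inr ⟨i, by omega, h1, h2⟩)

lemma aux_compl (m : ℕ) (hm : 0 < m) (U V : ℕ → ℝ)
    (hUV : ∀ l < m, U l ≤ V l) (hVU : ∀ l, l+1 < m → V l ≤ U (l+1)) :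
    univ \ (Iio (U 0) ∪ ((⋃ i, ⋃ (_ : i+1 < m), Ioo (V i) (U (i+1))) ∪ Ioi (V (m-1))))
      = ⋃ l, ⋃ (_ : l < m), Icc (U l) (V l) := by
  have hUm : ∀ i j, i ≤ j → j < m → U i ≤ U j := by
    intro i j hij hjm
    induction j with
    | zero => simp_all
    | succ n IHn =>
      rcases Nat.lt_or_ge i (n+1) with h | h
      · calc U i ≤ U n := IHn (by omega) (by omega)
          _ ≤ V n := hUV n (by omega)
          _ ≤ U (n+1) := hVU n hjm
      · have : i = n+1 := by omega
        rw [this]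
  have hVm : ∀ i j, i ≤ j → j < m → V i ≤ V j := by
    intro i j hij hjm
    induction j with
    | zero => simp_all
    | succ n IHn =>
      rcases Nat.lt_or_ge i (n+1) with h | h
      · calc V i ≤ V n := IHn (by omega) (by omega)
          _ ≤ U (n+1) := hVU n hjm
          _ ≤ V (n+1) := hUV (n+1) hjm
      · have : i = n+1 := by omega
        rw [this]
  ext x
  simp only [mem_diff, mem_univ, true_and, mem_union, mem_Iio, mem_Ioi, mem_iUnion,
    mem_Ioo, mem_Icc, not_or, not_exists, not_lt, not_and]
  constructor
  · rintro ⟨h0, hgap, hlast⟩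
    have key : ∀ l, l < m → V l ≥ x → ∃ l' < m, U l' ≤ x ∧ x ≤ V l' := by
      intro l
      induction l with
      | zero => intro hlm hxV; exact ⟨0, hlm, h0, hxV⟩
      | succ n IHn =>
        intro hlm hxV
        by_cases h : x ≤ V n
        · exact IHn (by omega) h
        · have hg := hgap n (by omega)
          push_neg at h
          have : U (n+1) ≤ x := by
            by_contra hc
            push_neg at hc
            exact absurd (hg h) (not_le.2 hc)
          exact ⟨n+1, hlm, this, hxV⟩
    obtain ⟨l, hl, h1, h2⟩ := key (m-1) (by omega) hlast
    exact ⟨l, hl, h1, h2⟩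
  · rintro ⟨l, hl, h1, h2⟩
    refine ⟨le_trans (hUm 0 l (by omega) hl) h1, ?_, le_trans h2 (hVm l (m-1) (by omega) (by omega))⟩
    intro i hi hVi
    -- show U (i+1) ≤ x  is false... goal: x < U (i+1) → False? actual: V i < x → ¬ x < U (i+1), i.e. U (i+1) ≤ x
    rcases Nat.lt_or_ge i l with h | h
    · calc U (i+1) ≤ U l := hUm (i+1) l (by omega) hl
        _ ≤ x := h1
    · exfalso
      have : x ≤ V i := le_trans h2 (hVm l i h (by omega))
      exact absurd hVi (not_lt.2 this)


/-- If the support of `ν` is a finite union of disjoint closed bounded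
intervals, then `ℝ ∖ 𝒪₁` is a finite union of disjoint closed bounded
intervals, each meeting `supp(ν)`, and containing `supp(ν)`. -/
theorem stmt_19 (ν : Measure ℝ) [IsProbabilityMeasure ν]
    (σ : ℝ) (hσ : 0 < σ)
    (m : ℕ) (hm : 0 < m) (a b : Fin m → ℝ)
    (hab : ∀ i, a i ≤ b i)
    (hdisj : ∀ i j : Fin m, i < j → b i < a j)
    (hsupp : msupport ν = ⋃ i, Set.Icc (a i) (b i)) :
    ∃ (p : ℕ) (u v : Fin p → ℝ), 0 < p ∧
      (∀ l, u l ≤ v l) ∧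
      (∀ l l' : Fin p, l < l' → v l < u l') ∧
      (Set.univ \ {w : ℝ | w ∉ msupport ν ∧
          0 < 1 - σ^2 * ∫ x, ((w - x)^2)⁻¹ ∂ν}
        = ⋃ l, Set.Icc (u l) (v l)) ∧
      (∀ l, (Set.Icc (u l) (v l) ∩ msupport ν).Nonempty) ∧
      msupport ν ⊆ ⋃ l, Set.Icc (u l) (v l) := by
  classical
  set h : ℝ → ℝ := fun w => ∫ x, ((w - x)^2)⁻¹ ∂ν with hh
  set A : ℕ → ℝ := fun i => if hi : i < m then a ⟨i, hi⟩ else 0 with hA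
  set B : ℕ → ℝ := fun i => if hi : i < m then b ⟨i, hi⟩ else 0 with hB
  set K : Set ℝ := ⋃ i, ⋃ (_ : i < m), Set.Icc (A i) (B i) with hK
  -- basic index facts
  have hAB : ∀ i, i < m → A i ≤ B i := by
    intro i hi; simp only [hA, hB, dif_pos hi]; exact hab _
  have hBA : ∀ i, i + 1 < m → B i < A (i+1) := by
    intro i hi
    simp only [hA, hB, dif_pos hi, dif_pos (by omega : i < m)]
    exact hdisj ⟨i, by omega⟩ ⟨i+1, hi⟩ (by simp [Fin.mk_lt_mk])
  have hAmono : ∀ i j, i ≤ j → j < m → A i ≤ A j := by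
    intro i j hij hjm
    rcases eq_or_lt_of_le hij with rfl | hlt
    · exact le_rfl
    · have h1 : i + 1 ≤ j := hlt
      refine le_of_lt ?_
      calc A i ≤ B i := hAB i (by omega)
        _ < A (i+1) := hBA i (by omega)
        _ ≤ A j := by
          clear hij hlt
          induction j with
          | zero => omega
          | succ n IHn =>
            rcases Nat.lt_or_ge (i+1) (n+1) with hn | hn
            · calc A (i+1) ≤ A n := IHn (by omega) (by omega)
                _ ≤ B n := hAB n (by omega)
                _ ≤ A (n+1) := (hBA n (by omega)).le
            · have : i + 1 = n + 1 := by omega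
              rw [this]
  have hBmono : ∀ i j, i ≤ j → j < m → B i ≤ B j := by
    intro i j hij hjm
    rcases eq_or_lt_of_le hij with rfl | hlt
    · exact le_rfl
    · refine le_of_lt ?_
      calc B i < A (i+1) := hBA i (by omega)
        _ ≤ A j := hAmono (i+1) j (by omega) hjm
        _ ≤ B j := hAB j hjm
  have hKfin : msupport ν = K := by
    rw [hsupp, hK]; ext x
    simp only [Set.mem_iUnion]
    constructor
    · rintro ⟨i, hx⟩
      refine ⟨i, i.2, ?_⟩
      simp only [hA, hB, dif_pos i.2]
      simpa using hx
    · rintro ⟨i, hi, hx⟩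
      refine ⟨⟨i, hi⟩, ?_⟩
      simp only [hA, hB, dif_pos hi] at hx
      exact hx
  have hae : ∀ᵐ x ∂ν, x ∈ K := by
    filter_upwards [aux_ae_msupport ν] with x hx
    rwa [hKfin] at hx
  have hKcl : IsClosed K := by
    rw [hK]
    exact Set.Finite.isClosed_biUnion (Set.finite_lt_nat m) (fun i _ => isClosed_Icc)
  have hxKlb : ∀ x ∈ K, A 0 ≤ x := by
    rintro x hx
    rw [hK] at hx
    simp only [Set.mem_iUnion, Set.mem_Icc] at hx
    obtain ⟨i, hi, h1, h2⟩ := hx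
    exact le_trans (hAmono 0 i (by omega) hi) h1
  have hxKub : ∀ x ∈ K, x ≤ B (m-1) := by
    rintro x hx
    rw [hK] at hx
    simp only [Set.mem_iUnion, Set.mem_Icc] at hx
    obtain ⟨i, hi, h1, h2⟩ := hx
    exact le_trans h2 (hBmono i (m-1) (by omega) (by omega))
  have hint : ∀ w, w ∉ K → Integrable (fun x => ((w - x)^2)⁻¹) ν := by
    intro w hw
    obtain ⟨ε, hε, hb⟩ := Metric.isOpen_iff.1 hKcl.isOpen_compl w hw
    refine aux_integrable ν hae hε ?_
    intro x hx
    by_contra hc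
    push_neg at hc
    refine (hb ?_) hx
    simp only [Metric.mem_ball, Real.dist_eq]
    rw [abs_sub_comm]
    exact hc
  have hconv : ∀ I : Set ℝ, Convex ℝ I → I ⊆ Kᶜ → ConvexOn ℝ I h :=
    fun I hI hIK => aux_h_convexOn ν hae hI (fun w hw => hint w (hIK hw))
      (fun x hx hxI => (hIK hxI) hx)
  have hgconv : ∀ I : Set ℝ, Convex ℝ I → I ⊆ Kᶜ → ConvexOn ℝ I (fun w => σ^2 * h w) := by
    intro I hI hIK
    have hc := hconv I hI hIK
    refine ⟨hI, ?_⟩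
    intro u hu v hv s t hs ht hst
    have := hc.2 hu hv hs ht hst
    simp only [smul_eq_mul] at this ⊢
    nlinarith [sq_nonneg σ]
  have hTopen : ∀ I : Set ℝ, IsOpen I → Convex ℝ I → I ⊆ Kᶜ →
      IsOpen {w ∈ I | σ^2 * h w < 1} := by
    intro I hIo hIc hIK
    have hcont : ContinuousOn (fun w => σ^2 * h w) I :=
      continuousOn_const.mul ((hconv I hIc hIK).continuousOn hIo)
    have heq : {w ∈ I | σ^2 * h w < 1} = I ∩ (fun w => σ^2 * h w) ⁻¹' (Iio 1) := by
      ext w; simp [Set.mem_sep_iff]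
    rw [heq]
    exact hcont.isOpen_inter_preimage hIo isOpen_Iio
  have hTconv : ∀ I : Set ℝ, Convex ℝ I → I ⊆ Kᶜ →
      Convex ℝ {w ∈ I | σ^2 * h w < 1} :=
    fun I hIc hIK => (hgconv I hIc hIK).convex_lt 1
  -- far-away bound
  have hfar : ∀ w : ℝ, (∀ x ∈ K, 2*σ ≤ |w - x|) → σ^2 * h w < 1 := by
    intro w hb
    have hle := aux_integral_le ν hae (by positivity : (0:ℝ) < 2*σ) hb
    have : σ^2 * h w ≤ σ^2 * ((2*σ)^2)⁻¹ := by
      rw [hh]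
      exact mul_le_mul_of_nonneg_left hle (sq_nonneg σ)
    have he : σ^2 * ((2*σ)^2)⁻¹ = 1/4 := by
      field_simp
      ring
    rw [he] at this
    linarith
  -- left ray
  have hIioK : Iio (A 0) ⊆ Kᶜ := fun w hw hwK => absurd (hxKlb w hwK) (not_le.2 hw)
  have hTLsub : {w ∈ Iio (A 0) | σ^2 * h w < 1} ⊆ Iio (A 0) := Set.sep_subset _ _
  have hrayL : Iio (A 0 - 2*σ) ⊆ {w ∈ Iio (A 0) | σ^2 * h w < 1} := by
    intro w hw
    simp only [Set.mem_Iio] at hw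
    refine ⟨by simp only [Set.mem_Iio]; linarith, ?_⟩
    refine hfar w ?_
    intro x hx
    have := hxKlb x hx
    rw [abs_of_nonpos (by linarith)]
    linarith
  obtain ⟨hTLeq, hTLle⟩ := aux_ray_left (hTopen _ isOpen_Iio (convex_Iio _) hIioK)
    (hTconv _ (convex_Iio _) hIioK) hTLsub hrayL
  set eL : ℝ := sSup {w ∈ Iio (A 0) | σ^2 * h w < 1} with heL
  -- right ray
  have hIoiK : Ioi (B (m-1)) ⊆ Kᶜ := fun w hw hwK => absurd (hxKub w hwK) (not_le.2 hw)
  have hTRsub : {w ∈ Ioi (B (m-1)) | σ^2 * h w < 1} ⊆ Ioi (B (m-1)) := Set.sep_subset _ _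
  have hrayR : Ioi (B (m-1) + 2*σ) ⊆ {w ∈ Ioi (B (m-1)) | σ^2 * h w < 1} := by
    intro w hw
    simp only [Set.mem_Ioi] at hw
    refine ⟨by simp only [Set.mem_Ioi]; linarith, ?_⟩
    refine hfar w ?_
    intro x hx
    have := hxKub x hx
    rw [abs_of_nonneg (by linarith)]
    linarith
  obtain ⟨hTReq, hTRle⟩ := aux_ray_right (hTopen _ isOpen_Ioi (convex_Ioi _) hIoiK)
    (hTconv _ (convex_Ioi _) hIoiK) hTRsub hrayR
  set fR : ℝ := sInf {w ∈ Ioi (B (m-1)) | σ^2 * h w < 1} with hfR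
  -- gaps
  have hgapK : ∀ i, i + 1 < m → Ioo (B i) (A (i+1)) ⊆ Kᶜ := by
    intro i hi w hw hwK
    rw [hK] at hwK
    simp only [Set.mem_iUnion, Set.mem_Icc] at hwK
    obtain ⟨j, hj, h1, h2⟩ := hwK
    simp only [Set.mem_Ioo] at hw
    rcases Nat.lt_or_ge j (i+1) with hcase | hcase
    · have : w ≤ B i := le_trans h2 (hBmono j i (by omega) (by omega))
      linarith [hw.1]
    · have : A (i+1) ≤ w := le_trans (hAmono (i+1) j hcase hj) h1
      linarith [hw.2]
  have hgapex : ∀ i : ℕ, ∃ ci di : ℝ, i + 1 < m →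
      B i ≤ ci ∧ ci ≤ di ∧ di ≤ A (i+1) ∧
      {w ∈ Ioo (B i) (A (i+1)) | σ^2 * h w < 1} = Ioo ci di := by
    intro i
    by_cases hi : i + 1 < m
    · set Ti := {w ∈ Ioo (B i) (A (i+1)) | σ^2 * h w < 1} with hTi
      by_cases hne : Ti.Nonempty
      · obtain ⟨heq, h1, h2⟩ := aux_Ioo (hTopen _ isOpen_Ioo (convex_Ioo _ _) (hgapK i hi))
          (hTconv _ (convex_Ioo _ _) (hgapK i hi)) (Set.sep_subset _ _) hne
        refine ⟨sInf Ti, sSup Ti, fun _ => ⟨h1, ?_, h2, heq⟩⟩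
        have hbb : BddBelow Ti := ⟨B i, fun x hx => hx.1.1.le⟩
        have hba : BddAbove Ti := ⟨A (i+1), fun x hx => hx.1.2.le⟩
        exact csInf_le_csSup hne hbb hba
      · refine ⟨B i, B i, fun _ => ⟨le_rfl, le_rfl, (hBA i hi).le, ?_⟩⟩
        rw [Set.not_nonempty_iff_eq_empty.1 hne, Set.Ioo_self]
    · exact ⟨0, 0, fun hc => absurd hc hi⟩
  choose c d hcd using hgapex
  -- the U V chain
  set U : ℕ → ℝ := fun l => if l = 0 then eL else d (l-1) with hU
  set V : ℕ → ℝ := fun l => if l = m-1 then fR else c l with hV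
  have hUA : ∀ l, l < m → U l ≤ A l := by
    intro l hl
    rcases Nat.eq_zero_or_pos l with rfl | hl0
    · simp only [hU, if_pos rfl]; exact hTLle
    · have hne : l ≠ 0 := by omega
      simp only [hU, if_neg hne]
      have := (hcd (l-1) (by omega)).2.2.1
      have hll : l - 1 + 1 = l := by omega
      rwa [hll] at this
  have hBV : ∀ l, l < m → B l ≤ V l := by
    intro l hl
    by_cases hml : l = m-1
    · simp only [hV, if_pos hml]
      rw [hml]
      exact hTRle
    · simp only [hV, if_neg hml]
      exact (hcd l (by omega)).1
  have hUV : ∀ l, l < m → U l ≤ V l := fun l hl =>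
    le_trans (hUA l hl) (le_trans (hAB l hl) (hBV l hl))
  have hVU : ∀ l, l + 1 < m → V l ≤ U (l+1) := by
    intro l hl
    have hne : l ≠ m - 1 := by omega
    have hne' : l + 1 ≠ 0 := by omega
    simp only [hV, if_neg hne, hU, if_neg hne', Nat.add_sub_cancel]
    exact (hcd l hl).2.1
  -- decomposition of the open set
  set O : Set ℝ := {w : ℝ | w ∉ K ∧ σ^2 * h w < 1} with hO
  have hOdec : O = Iio (U 0) ∪ ((⋃ i, ⋃ (_ : i+1 < m), Ioo (V i) (U (i+1))) ∪ Ioi (V (m-1))) := by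
    have hU0 : U 0 = eL := by simp [hU]
    have hVm : V (m-1) = fR := by simp [hV]
    have hgap' : ∀ i, i + 1 < m → Ioo (V i) (U (i+1)) = Ioo (c i) (d i) := by
      intro i hi
      have hne : i ≠ m - 1 := by omega
      have hne' : i + 1 ≠ 0 := by omega
      simp only [hV, if_neg hne, hU, if_neg hne', Nat.add_sub_cancel]
    rw [hU0, hVm]
    ext w
    simp only [hO, Set.mem_setOf_eq, Set.mem_union, Set.mem_iUnion]
    constructor
    · rintro ⟨hwK, hwσ⟩
      have hnotin : ∀ i < m, w ∉ Icc (A i) (B i) := by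
        intro i hi hin
        exact hwK (by rw [hK]; simp only [Set.mem_iUnion]; exact ⟨i, hi, hin⟩)
      rcases aux_trich m hm A B hAB hBA w hnotin with hc1 | hc1 | ⟨i, hi, h1, h2⟩
      · left
        rw [← hTLeq]
        exact ⟨hc1, hwσ⟩
      · right; right
        rw [← hTReq]
        exact ⟨hc1, hwσ⟩
      · right; left
        refine ⟨i, hi, ?_⟩
        rw [hgap' i hi, ← (hcd i hi).2.2.2]
        exact ⟨⟨h1, h2⟩, hwσ⟩
    · rintro (hc1 | ⟨i, hi, hc1⟩ | hc1)
      · rw [← hTLeq] at hc1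
        exact ⟨fun hwK => (hIioK hc1.1) hwK, hc1.2⟩
      · rw [hgap' i hi, ← (hcd i hi).2.2.2] at hc1
        exact ⟨fun hwK => (hgapK i hi hc1.1) hwK, hc1.2⟩
      · rw [← hTReq] at hc1
        exact ⟨fun hwK => (hIoiK hc1.1) hwK, hc1.2⟩
  have hC : univ \ O = ⋃ l, ⋃ (_ : l < m), Icc (U l) (V l) := by
    rw [hOdec]
    exact aux_compl m hm U V hUV hVU
  -- merge
  have hmeet : ∀ l < m, (Set.Icc (U l) (V l) ∩ K).Nonempty := by
    intro l hl
    refine ⟨A l, ⟨⟨hUA l hl, le_trans (hAB l hl) (hBV l hl)⟩, ?_⟩⟩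
    rw [hK]
    simp only [Set.mem_iUnion]
    exact ⟨l, hl, le_rfl, hAB l hl⟩
  obtain ⟨p, hp, u', v', H1, H2, H3, H4, _⟩ := aux_merge m hm U V K hUV hVU hmeet
  have hsep : ∀ l l', l < l' → l' < p → v' l < u' l' := by
    intro l l' hll' hl'p
    induction l' with
    | zero => omega
    | succ n IHn =>
      rcases Nat.lt_or_ge l n with hcase | hcase
      · calc v' l < u' n := IHn (by omega) (by omega)
          _ ≤ v' n := H1 n (by omega)
          _ < u' (n+1) := H2 n hl'p
      · have : l = n := by omega
        rw [this]
        exact H2 n hl'p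
  -- set identification
  have hset : {w : ℝ | w ∉ msupport ν ∧ 0 < 1 - σ^2 * ∫ x, ((w - x)^2)⁻¹ ∂ν} = O := by
    ext w
    simp only [hO, Set.mem_setOf_eq, hKfin, hh]
    constructor
    · rintro ⟨h1, h2⟩; exact ⟨h1, by linarith⟩
    · rintro ⟨h1, h2⟩; exact ⟨h1, by linarith⟩
  have hfinal : univ \ {w : ℝ | w ∉ msupport ν ∧ 0 < 1 - σ^2 * ∫ x, ((w - x)^2)⁻¹ ∂ν}
      = ⋃ l, ⋃ (_ : l < p), Icc (u' l) (v' l) := by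
    rw [hset, hC, ← H3]
  refine ⟨p, fun l => u' l, fun l => v' l, hp, ?_, ?_, ?_, ?_, ?_⟩
  · exact fun l => H1 l l.2
  · exact fun l l' hll' => hsep l l' hll' l'.2
  · rw [hfinal]
    ext x
    simp only [Set.mem_iUnion]
    constructor
    · rintro ⟨l, hl, hx⟩; exact ⟨⟨l, hl⟩, hx⟩
    · rintro ⟨l, hx⟩; exact ⟨l, l.2, hx⟩
  · intro l
    rw [hKfin]
    exact H4 l l.2
  · rw [hKfin]
    intro x hx
    have hxC : x ∈ univ \ O := ⟨trivial, fun hxO => hxO.1 hx⟩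
    rw [hC, ← H3] at hxC
    simp only [Set.mem_iUnion] at hxC
    obtain ⟨l, hl, hx'⟩ := hxC
    simp only [Set.mem_iUnion]
    exact ⟨⟨l, hl⟩, hx'⟩
end
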